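/- arXiv:1408.6397 — 6 statements merged into one kernel-verified Lean document; each statement's English description precedes it below -/
import Mathlib

section
/- The map F is locally Lipschitz continuous on H: for every R > 0 there exists a constant C(R, (a_n)) > 0 such that for all y, ỹ in the closed ball of radius R centered at 0 in H, ‖F(y) − F(ỹ)‖_H ≤ C(R, (a_n)) ‖y − ỹ‖_H. -/
noncomputable section

open scoped BigOperators RealInnerProductSpace
open MeasureTheory Filter

/-- The real Hilbert space ℓ² of square-summable sequences indexed by `n ≥ 1`. -/
abbrev l2 : Type := lp (fun _ : ℕ+ => ℝ) 2

/-- The real Hilbert space `H = ℝ × ℓ² × ℓ²` with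
`‖(x,u,v)‖² = |x|² + ‖u‖² + ‖v‖²`. -/
abbrev Hsp : Type := WithLp 2 (ℝ × WithLp 2 (l2 × l2))

/-- First (real) component of an element of `H`. -/
def Hx (y : Hsp) : ℝ := y.fst

/-- Second (ℓ²) component of an element of `H`. -/
def Hu (y : Hsp) : l2 := y.snd.fst

/-- Third (ℓ²) component of an element of `H`. -/
def Hv (y : Hsp) : l2 := y.snd.snd

/-- Build an element of `H` from its components. -/
def mkH (x : ℝ) (u v : l2) : Hsp := WithLp.toLp 2 (x, (WithLp.toLp 2 (u, v) : WithLp 2 (l2 × l2)))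

/-- The sequence `(a_n)` belongs to `O⁵`, i.e. `Σ (1+n²)⁵ aₙ² < ∞`. -/
def MemO5 (a : ℕ+ → ℝ) : Prop :=
  Summable fun n : ℕ+ => (1 + (n : ℝ) ^ 2) ^ 5 * a n ^ 2

/-- `F : H → H` is the drift map
`F(x,u,v) = (Σ √aₙ n (sin(nx) uₙ + cos(nx) vₙ), (√aₙ cos(nx))ₙ, (−√aₙ sin(nx))ₙ)`. -/
def IsDriftF (a : ℕ+ → ℝ) (F : Hsp → Hsp) : Prop :=
  ∀ y : Hsp,
    Hx (F y) = (∑' n : ℕ+, Real.sqrt (a n) * (n : ℝ) *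
        (Real.sin ((n : ℝ) * Hx y) * Hu y n + Real.cos ((n : ℝ) * Hx y) * Hv y n)) ∧
    (∀ n : ℕ+, Hu (F y) n = Real.sqrt (a n) * Real.cos ((n : ℝ) * Hx y)) ∧
    (∀ n : ℕ+, Hv (F y) n = -(Real.sqrt (a n) * Real.sin ((n : ℝ) * Hx y)))

/-! ### Auxiliary lemmas -/

lemma aux_inv_sq : Summable fun n : ℕ+ => ((n:ℝ)^2)⁻¹ := by
  have h : Summable fun n : ℕ => ((n:ℝ)^2)⁻¹ := by
    simpa using Real.summable_one_div_nat_pow.mpr (by norm_num : 1 < 2)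
  exact h.comp_injective (fun m n h => PNat.coe_injective (by exact_mod_cast h))

lemma aux_pow (a : ℕ+ → ℝ) (hpos : ∀ n, 0 < a n) (hO5 : MemO5 a) (k : ℕ) (hk : k ≤ 4) :
    Summable fun n : ℕ+ => a n * (n:ℝ)^k := by
  have hsum : Summable fun n : ℕ+ =>
      ((1 + (n : ℝ) ^ 2) ^ 5 * a n ^ 2 + ((n:ℝ)^2)⁻¹) / 2 :=
    (hO5.add aux_inv_sq).div_const 2
  refine Summable.of_nonneg_of_le
    (fun n => mul_nonneg (hpos n).le (by positivity)) (fun n => ?_) hsum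
  have h1 : (1:ℝ) ≤ (n:ℝ) := by exact_mod_cast n.one_le
  have hn : (0:ℝ) < (n:ℝ) := by positivity
  set A := a n * (n:ℝ)^(k+1) with hA
  set B := ((n:ℝ))⁻¹ with hB
  have hab : a n * (n:ℝ)^k = A * B := by
    rw [hA, hB, pow_succ]; field_simp
  have key : A * B ≤ (A^2 + B^2) / 2 := by nlinarith [sq_nonneg (A - B)]
  rw [hab]
  refine key.trans (div_le_div_of_nonneg_right ?_ (by norm_num))
  have h10 : (n:ℝ)^(2*(k+1)) ≤ (1 + (n:ℝ)^2)^5 := by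
    calc (n:ℝ)^(2*(k+1)) ≤ (n:ℝ)^10 := pow_le_pow_right₀ h1 (by omega)
    _ = ((n:ℝ)^2)^5 := by ring
    _ ≤ (1 + (n:ℝ)^2)^5 := pow_le_pow_left₀ (by positivity) (by linarith) 5
  have hA2 : A^2 = a n ^2 * (n:ℝ)^(2*(k+1)) := by rw [hA]; ring
  rw [hA2, hB]
  have := mul_le_mul_of_nonneg_left h10 (sq_nonneg (a n))
  rw [inv_pow]
  linarith

lemma mem_l2 (c : ℕ+ → ℝ) (hc : Summable fun n => c n ^ 2) : Memℓp c 2 := by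
  apply memℓp_gen
  have : ((2:ENNReal).toReal) = (2:ℝ) := rfl
  rw [this]
  exact hc.congr (fun n => by rw [Real.rpow_two, Real.norm_eq_abs, sq_abs])

lemma cs_summable (c : ℕ+ → ℝ) (hc : Summable fun n => c n ^ 2) (u : l2) :
    Summable fun n => c n * u n := by
  have := lp.summable_inner (𝕜 := ℝ) (⟨c, mem_l2 c hc⟩ : l2) u
  simpa [RCLike.inner_apply, starRingEnd_apply, mul_comm] using this

lemma cs_eq (c : ℕ+ → ℝ) (hc : Summable fun n => c n ^ 2) (u : l2) :
    ⟪(⟨c, mem_l2 c hc⟩ : l2), u⟫ = ∑' n, c n * u n := by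
  rw [lp.inner_eq_tsum]
  exact tsum_congr fun n => by simp [RCLike.inner_apply, starRingEnd_apply, mul_comm]

lemma cs_bound (c : ℕ+ → ℝ) (hc : Summable fun n => c n ^ 2) (u : l2) :
    |∑' n, c n * u n| ≤ Real.sqrt (∑' n, c n ^ 2) * ‖u‖ := by
  set W : l2 := ⟨c, mem_l2 c hc⟩ with hW
  have h1 : |⟪W, u⟫| ≤ ‖W‖ * ‖u‖ := abs_real_inner_le_norm W u
  have h2 : ‖W‖ = Real.sqrt (∑' n, c n ^ 2) := by
    rw [← Real.sqrt_sq (norm_nonneg W), ← real_inner_self_eq_norm_sq]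
    congr 1
    rw [lp.inner_eq_tsum]
    exact tsum_congr fun n => by simp [RCLike.inner_apply, starRingEnd_apply]; ring
  rw [cs_eq c hc u] at h1
  rwa [h2] at h1

lemma cs_summable' (c b : ℕ+ → ℝ) (hb : Summable b) (hcb : ∀ n, c n ^ 2 ≤ b n) (u : l2) :
    Summable fun n => c n * u n :=
  cs_summable c (Summable.of_nonneg_of_le (fun n => sq_nonneg _) hcb hb) u

lemma cs_bound' (c b : ℕ+ → ℝ) (hb : Summable b) (hcb : ∀ n, c n ^ 2 ≤ b n) (u : l2) :
    |∑' n, c n * u n| ≤ Real.sqrt (∑' n, b n) * ‖u‖ := by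
  have hc : Summable fun n => c n ^ 2 :=
    Summable.of_nonneg_of_le (fun n => sq_nonneg _) hcb hb
  refine (cs_bound c hc u).trans (mul_le_mul_of_nonneg_right ?_ (norm_nonneg u))
  exact Real.sqrt_le_sqrt (Summable.tsum_le_tsum hcb hc hb)

lemma norm_l2_le (d : l2) (b : ℕ+ → ℝ) (hb : Summable b) (hd : ∀ n, (d n)^2 ≤ b n) :
    ‖d‖ ≤ Real.sqrt (∑' n, b n) := by
  rw [← Real.sqrt_sq (norm_nonneg d)]
  apply Real.sqrt_le_sqrt
  rw [← real_inner_self_eq_norm_sq, lp.inner_eq_tsum]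
  have hsum : Summable fun n => (inner ℝ (d n) (d n) : ℝ) := lp.summable_inner d d
  refine Summable.tsum_le_tsum (fun n => ?_) hsum hb
  simpa [RCLike.inner_apply, starRingEnd_apply, ← sq] using hd n

lemma hx_le (z : Hsp) : |Hx z| ≤ ‖z‖ := by
  have h1 := WithLp.prod_norm_sq_eq_of_L2 z
  have : |Hx z| = ‖z.fst‖ := (Real.norm_eq_abs _).symm
  nlinarith [norm_nonneg z, norm_nonneg z.fst, norm_nonneg z.snd, abs_nonneg (Hx z)]

lemma hu_le (z : Hsp) : ‖Hu z‖ ≤ ‖z‖ := by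
  have h1 := WithLp.prod_norm_sq_eq_of_L2 z
  have h2 := WithLp.prod_norm_sq_eq_of_L2 z.snd
  have : ‖Hu z‖ = ‖z.snd.fst‖ := rfl
  nlinarith [norm_nonneg z, norm_nonneg z.fst, norm_nonneg z.snd, norm_nonneg z.snd.fst,
    norm_nonneg z.snd.snd, norm_nonneg (Hu z)]

lemma hv_le (z : Hsp) : ‖Hv z‖ ≤ ‖z‖ := by
  have h1 := WithLp.prod_norm_sq_eq_of_L2 z
  have h2 := WithLp.prod_norm_sq_eq_of_L2 z.snd
  have : ‖Hv z‖ = ‖z.snd.snd‖ := rfl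
  nlinarith [norm_nonneg z, norm_nonneg z.fst, norm_nonneg z.snd, norm_nonneg z.snd.fst,
    norm_nonneg z.snd.snd, norm_nonneg (Hv z)]

lemma norm_le_sum (z : Hsp) : ‖z‖ ≤ |Hx z| + ‖Hu z‖ + ‖Hv z‖ := by
  have h1 := WithLp.prod_norm_sq_eq_of_L2 z
  have h2 := WithLp.prod_norm_sq_eq_of_L2 z.snd
  have e1 : |Hx z| = ‖z.fst‖ := (Real.norm_eq_abs _).symm
  have e2 : ‖Hu z‖ = ‖z.snd.fst‖ := rfl
  have e3 : ‖Hv z‖ = ‖z.snd.snd‖ := rfl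
  rw [e1, e2, e3]
  nlinarith [norm_nonneg z, norm_nonneg z.fst, norm_nonneg z.snd, norm_nonneg z.snd.fst,
    norm_nonneg z.snd.snd, mul_nonneg (norm_nonneg z.fst) (norm_nonneg z.snd.fst),
    mul_nonneg (norm_nonneg z.fst) (norm_nonneg z.snd.snd),
    mul_nonneg (norm_nonneg z.snd.fst) (norm_nonneg z.snd.snd)]

lemma sq_trig_le (an : ℝ) (han : 0 ≤ an) (m s : ℝ) (hs : s^2 ≤ 1) :
    (Real.sqrt an * m * s)^2 ≤ an * m^2 := by
  have h1 : (Real.sqrt an)^2 = an := Real.sq_sqrt han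
  calc (Real.sqrt an * m * s)^2 = an * m^2 * s^2 := by rw [mul_pow, mul_pow, h1]
    _ ≤ an * m^2 * 1 := mul_le_mul_of_nonneg_left hs (mul_nonneg han (sq_nonneg m))
    _ = an * m^2 := mul_one _

lemma trig_diff_sq (an m t s : ℝ) (han : 0 ≤ an) (f : ℝ → ℝ) (hf : LipschitzWith 1 f) :
    (Real.sqrt an * (f (m*t) - f (m*s)))^2 ≤ an * (m^2 * (t-s)^2) := by
  have h := hf.dist_le_mul (m*t) (m*s)
  rw [Real.dist_eq, Real.dist_eq, NNReal.coe_one, one_mul] at h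
  have h2 : (f (m*t) - f (m*s))^2 ≤ (m*t - m*s)^2 := by
    rw [← sq_abs (f (m*t) - f (m*s)), ← sq_abs (m*t - m*s)]
    exact pow_le_pow_left₀ (abs_nonneg _) h 2
  have h3 : (m*t - m*s)^2 = m^2*(t-s)^2 := by ring
  have h4 : (Real.sqrt an)^2 = an := Real.sq_sqrt han
  calc (Real.sqrt an * (f (m*t) - f (m*s)))^2
      = an * (f (m*t) - f (m*s))^2 := by rw [mul_pow, h4]
    _ ≤ an * (m^2 * (t-s)^2) := mul_le_mul_of_nonneg_left (h2.trans_eq h3) han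

lemma lip_sin : LipschitzWith 1 Real.sin := by
  apply lipschitzWith_of_nnnorm_deriv_le Real.differentiable_sin
  intro x
  rw [Real.deriv_sin]
  rw [← NNReal.coe_le_coe, coe_nnnorm, Real.norm_eq_abs, NNReal.coe_one]
  exact Real.abs_cos_le_one x

lemma lip_cos : LipschitzWith 1 Real.cos := by
  apply lipschitzWith_of_nnnorm_deriv_le Real.differentiable_cos
  intro x
  rw [Real.deriv_cos]
  rw [← NNReal.coe_le_coe, coe_nnnorm, Real.norm_eq_abs, NNReal.coe_one]
  rw [abs_neg]
  exact Real.abs_sin_le_one x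

/-- `F` is locally Lipschitz on `H`: for every `R > 0` there is a
constant `C(R,(aₙ)) > 0` such that `‖F(y) − F(ỹ)‖ ≤ C ‖y − ỹ‖` for all `y, ỹ` in the
closed ball of radius `R` centered at `0`. -/
theorem stmt2 (a : ℕ+ → ℝ) (hpos : ∀ n, 0 < a n) (hO5 : MemO5 a)
    (F : Hsp → Hsp) (hF : IsDriftF a F) :
    ∀ R > (0 : ℝ), ∃ C > (0 : ℝ), ∀ y ∈ Metric.closedBall (0 : Hsp) R,
      ∀ ytil ∈ Metric.closedBall (0 : Hsp) R,
        ‖F y - F ytil‖ ≤ C * ‖y - ytil‖ := by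
  intro R hR
  have hS2 : Summable fun n : ℕ+ => a n * (n:ℝ)^2 := aux_pow a hpos hO5 2 (by norm_num)
  have hS4 : Summable fun n : ℕ+ => a n * (n:ℝ)^4 := aux_pow a hpos hO5 4 (by norm_num)
  have hS2n : (0:ℝ) ≤ ∑' n : ℕ+, a n * (n:ℝ)^2 :=
    tsum_nonneg fun n => mul_nonneg (hpos n).le (by positivity)
  have hS4n : (0:ℝ) ≤ ∑' n : ℕ+, a n * (n:ℝ)^4 :=
    tsum_nonneg fun n => mul_nonneg (hpos n).le (by positivity)
  refine ⟨4 * Real.sqrt (∑' n : ℕ+, a n * (n:ℝ)^2)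
      + 2 * Real.sqrt (∑' n : ℕ+, a n * (n:ℝ)^4) * R + 1, by positivity, ?_⟩
  intro y hy yt hyt
  obtain ⟨hFx, hFu, hFv⟩ := hF y
  obtain ⟨hFxt, hFut, hFvt⟩ := hF yt
  -- coefficient sequences
  set c1 : ℕ+ → ℝ := fun n => Real.sqrt (a n) * (n:ℝ) * Real.sin ((n:ℝ) * Hx y) with hc1d
  set c2 : ℕ+ → ℝ := fun n => Real.sqrt (a n) * (n:ℝ) *
      (Real.sin ((n:ℝ) * Hx y) - Real.sin ((n:ℝ) * Hx yt)) with hc2d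
  set c3 : ℕ+ → ℝ := fun n => Real.sqrt (a n) * (n:ℝ) * Real.cos ((n:ℝ) * Hx y) with hc3d
  set c4 : ℕ+ → ℝ := fun n => Real.sqrt (a n) * (n:ℝ) *
      (Real.cos ((n:ℝ) * Hx y) - Real.cos ((n:ℝ) * Hx yt)) with hc4d
  set c1t : ℕ+ → ℝ := fun n => Real.sqrt (a n) * (n:ℝ) * Real.sin ((n:ℝ) * Hx yt) with hc1td
  set c3t : ℕ+ → ℝ := fun n => Real.sqrt (a n) * (n:ℝ) * Real.cos ((n:ℝ) * Hx yt) with hc3td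
  set b4 : ℕ+ → ℝ := fun n => (a n * (n:ℝ)^4) * (Hx y - Hx yt)^2 with hb4d
  have hb4 : Summable b4 := hS4.mul_right _
  -- pointwise bounds on squares of coefficients
  have hc1 : ∀ n, c1 n ^ 2 ≤ a n * (n:ℝ)^2 := fun n =>
    sq_trig_le (a n) (hpos n).le _ _ (Real.sin_sq_le_one _)
  have hc3 : ∀ n, c3 n ^ 2 ≤ a n * (n:ℝ)^2 := fun n =>
    sq_trig_le (a n) (hpos n).le _ _ (Real.cos_sq_le_one _)
  have hc1t : ∀ n, c1t n ^ 2 ≤ a n * (n:ℝ)^2 := fun n =>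
    sq_trig_le (a n) (hpos n).le _ _ (Real.sin_sq_le_one _)
  have hc3t : ∀ n, c3t n ^ 2 ≤ a n * (n:ℝ)^2 := fun n =>
    sq_trig_le (a n) (hpos n).le _ _ (Real.cos_sq_le_one _)
  have hc2 : ∀ n, c2 n ^ 2 ≤ b4 n := by
    intro n
    have h := trig_diff_sq (a n) (n:ℝ) (Hx y) (Hx yt) (hpos n).le Real.sin
      lip_sin
    have e1 : c2 n ^ 2 = (n:ℝ)^2 * (Real.sqrt (a n) *
        (Real.sin ((n:ℝ) * Hx y) - Real.sin ((n:ℝ) * Hx yt)))^2 := by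
      rw [hc2d]; ring
    have e2 : b4 n = (n:ℝ)^2 * (a n * ((n:ℝ)^2 * (Hx y - Hx yt)^2)) := by
      rw [hb4d]; ring
    rw [e1, e2]
    exact mul_le_mul_of_nonneg_left h (sq_nonneg _)
  have hc4 : ∀ n, c4 n ^ 2 ≤ b4 n := by
    intro n
    have h := trig_diff_sq (a n) (n:ℝ) (Hx y) (Hx yt) (hpos n).le Real.cos
      lip_cos
    have e1 : c4 n ^ 2 = (n:ℝ)^2 * (Real.sqrt (a n) *
        (Real.cos ((n:ℝ) * Hx y) - Real.cos ((n:ℝ) * Hx yt)))^2 := by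
      rw [hc4d]; ring
    have e2 : b4 n = (n:ℝ)^2 * (a n * ((n:ℝ)^2 * (Hx y - Hx yt)^2)) := by
      rw [hb4d]; ring
    rw [e1, e2]
    exact mul_le_mul_of_nonneg_left h (sq_nonneg _)
  -- summabilities
  have hA : Summable fun n => c1 n * (Hu y - Hu yt) n := cs_summable' c1 _ hS2 hc1 _
  have hB : Summable fun n => c2 n * Hu yt n := cs_summable' c2 _ hb4 hc2 _
  have hC : Summable fun n => c3 n * (Hv y - Hv yt) n := cs_summable' c3 _ hS2 hc3 _
  have hD : Summable fun n => c4 n * Hv yt n := cs_summable' c4 _ hb4 hc4 _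
  have hf : Summable fun n : ℕ+ => Real.sqrt (a n) * (n : ℝ) *
      (Real.sin ((n : ℝ) * Hx y) * Hu y n + Real.cos ((n : ℝ) * Hx y) * Hv y n) := by
    have := (cs_summable' c1 _ hS2 hc1 (Hu y)).add (cs_summable' c3 _ hS2 hc3 (Hv y))
    exact this.congr (fun n => by simp only [hc1d, hc3d]; ring)
  have hg : Summable fun n : ℕ+ => Real.sqrt (a n) * (n : ℝ) *
      (Real.sin ((n : ℝ) * Hx yt) * Hu yt n + Real.cos ((n : ℝ) * Hx yt) * Hv yt n) := by
    have := (cs_summable' c1t _ hS2 hc1t (Hu yt)).add (cs_summable' c3t _ hS2 hc3t (Hv yt))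
    exact this.congr (fun n => by simp only [hc1td, hc3td]; ring)
  -- splitting the first component
  have key : HasSum (fun n : ℕ+ => c1 n * (Hu y - Hu yt) n + c2 n * Hu yt n
        + c3 n * (Hv y - Hv yt) n + c4 n * Hv yt n)
      ((∑' n, c1 n * (Hu y - Hu yt) n) + (∑' n, c2 n * Hu yt n)
        + (∑' n, c3 n * (Hv y - Hv yt) n) + (∑' n, c4 n * Hv yt n)) :=
    ((hA.hasSum.add hB.hasSum).add hC.hasSum).add hD.hasSum
  have hsplit : Hx (F y) - Hx (F yt) = (∑' n, c1 n * (Hu y - Hu yt) n)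
      + (∑' n, c2 n * Hu yt n) + (∑' n, c3 n * (Hv y - Hv yt) n)
      + (∑' n, c4 n * Hv yt n) := by
    rw [hFx, hFxt, ← Summable.tsum_sub hf hg, ← key.tsum_eq]
    refine tsum_congr fun n => ?_
    simp only [lp.coeFn_sub, Pi.sub_apply, hc1d, hc2d, hc3d, hc4d]
    ring
  -- bounds on the four pieces
  have hT1 : |∑' n, c1 n * (Hu y - Hu yt) n| ≤
      Real.sqrt (∑' n : ℕ+, a n * (n:ℝ)^2) * ‖Hu y - Hu yt‖ := cs_bound' c1 _ hS2 hc1 _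
  have hT3 : |∑' n, c3 n * (Hv y - Hv yt) n| ≤
      Real.sqrt (∑' n : ℕ+, a n * (n:ℝ)^2) * ‖Hv y - Hv yt‖ := cs_bound' c3 _ hS2 hc3 _
  have hsqrtb4 : Real.sqrt (∑' n, b4 n) =
      Real.sqrt (∑' n : ℕ+, a n * (n:ℝ)^4) * |Hx y - Hx yt| := by
    rw [hb4d, tsum_mul_right, Real.sqrt_mul hS4n, Real.sqrt_sq_eq_abs]
  have hT2 : |∑' n, c2 n * Hu yt n| ≤
      Real.sqrt (∑' n : ℕ+, a n * (n:ℝ)^4) * |Hx y - Hx yt| * ‖Hu yt‖ := by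
    have := cs_bound' c2 _ hb4 hc2 (Hu yt)
    rwa [hsqrtb4] at this
  have hT4 : |∑' n, c4 n * Hv yt n| ≤
      Real.sqrt (∑' n : ℕ+, a n * (n:ℝ)^4) * |Hx y - Hx yt| * ‖Hv yt‖ := by
    have := cs_bound' c4 _ hb4 hc4 (Hv yt)
    rwa [hsqrtb4] at this
  -- bounds on the ℓ² components
  have hb2 : Summable fun n : ℕ+ => (a n * (n:ℝ)^2) * (Hx y - Hx yt)^2 := hS2.mul_right _
  have hsqrtb2 : Real.sqrt (∑' n : ℕ+, (a n * (n:ℝ)^2) * (Hx y - Hx yt)^2) =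
      Real.sqrt (∑' n : ℕ+, a n * (n:ℝ)^2) * |Hx y - Hx yt| := by
    rw [tsum_mul_right, Real.sqrt_mul hS2n, Real.sqrt_sq_eq_abs]
  have hNu : ‖Hu (F y - F yt)‖ ≤
      Real.sqrt (∑' n : ℕ+, a n * (n:ℝ)^2) * |Hx y - Hx yt| := by
    rw [← hsqrtb2]
    refine norm_l2_le _ _ hb2 fun n => ?_
    have e : (Hu (F y - F yt)) n = Real.sqrt (a n) *
        (Real.cos ((n:ℝ) * Hx y) - Real.cos ((n:ℝ) * Hx yt)) := by
      have h0 : Hu (F y - F yt) = Hu (F y) - Hu (F yt) := rfl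
      rw [h0, lp.coeFn_sub, Pi.sub_apply, hFu n, hFut n]; ring
    rw [e, mul_assoc]
    exact trig_diff_sq (a n) (n:ℝ) (Hx y) (Hx yt) (hpos n).le Real.cos
      lip_cos
  have hNv : ‖Hv (F y - F yt)‖ ≤
      Real.sqrt (∑' n : ℕ+, a n * (n:ℝ)^2) * |Hx y - Hx yt| := by
    rw [← hsqrtb2]
    refine norm_l2_le _ _ hb2 fun n => ?_
    have e : (Hv (F y - F yt)) n = -(Real.sqrt (a n) *
        (Real.sin ((n:ℝ) * Hx y) - Real.sin ((n:ℝ) * Hx yt))) := by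
      have h0 : Hv (F y - F yt) = Hv (F y) - Hv (F yt) := rfl
      rw [h0, lp.coeFn_sub, Pi.sub_apply, hFv n, hFvt n]; ring
    rw [e, neg_sq, mul_assoc]
    exact trig_diff_sq (a n) (n:ℝ) (Hx y) (Hx yt) (hpos n).le Real.sin
      lip_sin
  -- component bounds of y - yt
  have hDx : |Hx y - Hx yt| ≤ ‖y - yt‖ := hx_le (y - yt)
  have hDu : ‖Hu y - Hu yt‖ ≤ ‖y - yt‖ := hu_le (y - yt)
  have hDv : ‖Hv y - Hv yt‖ ≤ ‖y - yt‖ := hv_le (y - yt)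
  have hytR : ‖yt‖ ≤ R := mem_closedBall_zero_iff.mp hyt
  have hRu : ‖Hu yt‖ ≤ R := (hu_le yt).trans hytR
  have hRv : ‖Hv yt‖ ≤ R := (hv_le yt).trans hytR
  -- assemble
  have habs : |Hx (F y - F yt)| ≤ |∑' n, c1 n * (Hu y - Hu yt) n|
      + |∑' n, c2 n * Hu yt n| + |∑' n, c3 n * (Hv y - Hv yt) n|
      + |∑' n, c4 n * Hv yt n| := by
    rw [show Hx (F y - F yt) = Hx (F y) - Hx (F yt) from rfl, hsplit]
    calc |(∑' n, c1 n * (Hu y - Hu yt) n) + (∑' n, c2 n * Hu yt n)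
          + (∑' n, c3 n * (Hv y - Hv yt) n) + (∑' n, c4 n * Hv yt n)|
        ≤ |(∑' n, c1 n * (Hu y - Hu yt) n) + (∑' n, c2 n * Hu yt n)
          + (∑' n, c3 n * (Hv y - Hv yt) n)| + |∑' n, c4 n * Hv yt n| := abs_add_le _ _
      _ ≤ (|∑' n, c1 n * (Hu y - Hu yt) n| + |∑' n, c2 n * Hu yt n|
          + |∑' n, c3 n * (Hv y - Hv yt) n|) + |∑' n, c4 n * Hv yt n| := by
          gcongr
          exact abs_add_three _ _ _
      _ = _ := by ring
  set Q2 := Real.sqrt (∑' n : ℕ+, a n * (n:ℝ)^2) with hQ2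
  set Q4 := Real.sqrt (∑' n : ℕ+, a n * (n:ℝ)^4) with hQ4
  have hQ2n : 0 ≤ Q2 := Real.sqrt_nonneg _
  have hQ4n : 0 ≤ Q4 := Real.sqrt_nonneg _
  set N := ‖y - yt‖ with hN
  have hNn : 0 ≤ N := norm_nonneg _
  have step2 : Q4 * |Hx y - Hx yt| * ‖Hu yt‖ ≤ Q4 * N * R :=
    mul_le_mul (mul_le_mul_of_nonneg_left hDx hQ4n) hRu (norm_nonneg _)
      (by positivity)
  have step4 : Q4 * |Hx y - Hx yt| * ‖Hv yt‖ ≤ Q4 * N * R :=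
    mul_le_mul (mul_le_mul_of_nonneg_left hDx hQ4n) hRv (norm_nonneg _)
      (by positivity)
  have main : ‖F y - F yt‖ ≤ |Hx (F y - F yt)| + ‖Hu (F y - F yt)‖ + ‖Hv (F y - F yt)‖ :=
    norm_le_sum _
  have hfin : (4 * Q2 + 2 * Q4 * R + 1) * N = 4 * (Q2 * N) + 2 * (Q4 * N * R) + N := by
    ring
  have hq2du : Q2 * ‖Hu y - Hu yt‖ ≤ Q2 * N := mul_le_mul_of_nonneg_left hDu hQ2n
  have hq2dv : Q2 * ‖Hv y - Hv yt‖ ≤ Q2 * N := mul_le_mul_of_nonneg_left hDv hQ2n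
  have hq2dx : Q2 * |Hx y - Hx yt| ≤ Q2 * N := mul_le_mul_of_nonneg_left hDx hQ2n
  linarith [hT1, hT2, hT3, hT4, hNu, hNv, habs, main]
end
end

section
/- There exists a constant C > 0, depending only on the sequence (a_n)_{n≥1}, such that with the increasing function a(α) = C(1+α) one has, for all y, ỹ ∈ H with y ≠ 0, the inequality ⟨F(y + ỹ), y/‖y‖_H⟩_H ≤ a(‖ỹ‖_H)(1 + ‖y‖_H), where ⟨·,·⟩_H is the inner product of H. -/
noncomputable section

open scoped BigOperators RealInnerProductSpace
open MeasureTheory Filter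

lemma meml2_of_sq_summable (f : ℕ+ → ℝ) (h : Summable fun n => (f n) ^ 2) :
    Memℓp f 2 := by
  apply memℓp_gen
  refine h.congr fun n => ?_
  simp [ENNReal.toReal_ofNat, Real.rpow_natCast, Real.norm_eq_abs, sq_abs]

lemma le_of_sq_le_sq' {A B : ℝ} (hA : 0 ≤ A) (hB : 0 ≤ B) (h : A ^ 2 ≤ B ^ 2) : A ≤ B := by
  nlinarith

lemma l2_norm_le (f : l2) (b : ℕ+ → ℝ) (hb : Summable b)
    (h : ∀ n, (f n) ^ 2 ≤ b n) : ‖f‖ ≤ Real.sqrt (∑' n, b n) := by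
  have hsum : Summable fun n : ℕ+ => (f n) ^ 2 :=
    (lp.summable_inner f f).congr fun n => (sq (f n)).symm
  have h2 : ‖f‖ ^ 2 = ∑' n, (f n) ^ 2 := by
    rw [← real_inner_self_eq_norm_sq, lp.inner_eq_tsum]
    exact tsum_congr fun n => (sq (f n)).symm
  have hle : ‖f‖ ^ 2 ≤ ∑' n, b n := h2 ▸ Summable.tsum_le_tsum h hsum hb
  calc ‖f‖ = Real.sqrt (‖f‖ ^ 2) := (Real.sqrt_sq (norm_nonneg f)).symm
    _ ≤ Real.sqrt (∑' n, b n) := Real.sqrt_le_sqrt hle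

set_option maxHeartbeats 1000000 in
/-- There is a constant `C > 0` depending only on `(aₙ)` such that,
with the increasing function `a(α) = C(1+α)`, one has
`⟨F(y + ỹ), y/‖y‖⟩_H ≤ a(‖ỹ‖)(1 + ‖y‖)` for all `y ≠ 0` and `ỹ` in `H`. -/
theorem stmt4 (a : ℕ+ → ℝ) (hpos : ∀ n, 0 < a n) (hO5 : MemO5 a)
    (F : Hsp → Hsp) (hF : IsDriftF a F) :
    ∃ C > (0 : ℝ), ∀ y ytil : Hsp, y ≠ 0 →
      ⟪F (y + ytil), ‖y‖⁻¹ • y⟫ ≤ (C * (1 + ‖ytil‖)) * (1 + ‖y‖) := by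
  -- Summability preliminaries
  have hinv : Summable (fun n : ℕ+ => (((1 : ℝ) + (n : ℝ) ^ 2) ^ 3)⁻¹) := by
    have h0 : Summable (fun n : ℕ => 1 / (n : ℝ) ^ 2) :=
      Real.summable_one_div_nat_pow.mpr one_lt_two
    have h1 : Summable (fun n : ℕ+ => 1 / (n : ℝ) ^ 2) := h0.subtype _
    refine h1.of_nonneg_of_le (fun n => by positivity) (fun n => ?_)
    have hn : (1 : ℝ) ≤ (n : ℝ) := by exact_mod_cast n.one_le
    rw [one_div]
    apply inv_anti₀ (by positivity)
    nlinarith [sq_nonneg ((n : ℝ) ^ 2), sq_nonneg (n : ℝ)]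
  have hS : Summable (fun n : ℕ+ => a n * (1 + (n : ℝ) ^ 2)) := by
    have hmaj : Summable (fun n : ℕ+ =>
        (1 / 2 : ℝ) * ((1 + (n : ℝ) ^ 2) ^ 5 * a n ^ 2 + (((1 : ℝ) + (n : ℝ) ^ 2) ^ 3)⁻¹)) :=
      (hO5.add hinv).mul_left _
    refine hmaj.of_nonneg_of_le (fun n => mul_nonneg (hpos n).le (by positivity)) (fun n => ?_)
    set q : ℝ := 1 + (n : ℝ) ^ 2 with hq
    have hq0 : (0 : ℝ) < q := by positivity
    have ha := hpos n
    set p : ℝ := q ^ 5 * a n ^ 2 with hp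
    set r : ℝ := (q ^ 3)⁻¹ with hr
    have hr0 : (0 : ℝ) < r := by positivity
    have hp0 : (0 : ℝ) ≤ p := by positivity
    have hpr : (a n * q) ^ 2 = p * r := by
      rw [hp, hr]
      field_simp
    have key : a n * q ≤ (p + r) / 2 := by
      have h1 : p * r ≤ ((p + r) / 2) ^ 2 := by nlinarith [sq_nonneg (p - r)]
      calc a n * q = Real.sqrt ((a n * q) ^ 2) :=
            (Real.sqrt_sq (mul_nonneg ha.le hq0.le)).symm
        _ = Real.sqrt (p * r) := by rw [hpr]
        _ ≤ Real.sqrt (((p + r) / 2) ^ 2) := Real.sqrt_le_sqrt h1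
        _ = (p + r) / 2 := Real.sqrt_sq (by positivity)
    linarith
  set S : ℝ := ∑' n, a n * (1 + (n : ℝ) ^ 2) with hSdef
  set K : ℝ := Real.sqrt S with hKdef
  have hK0 : 0 ≤ K := Real.sqrt_nonneg _
  refine ⟨2 * K + 2, by positivity, fun y ytil hy => ?_⟩
  set z : Hsp := y + ytil with hz
  obtain ⟨hFx, hFu, hFv⟩ := hF z
  set x : ℝ := Hx z with hxdef
  have hg1sq : ∀ n : ℕ+, (Real.sqrt (a n) * (n : ℝ) * Real.sin ((n : ℝ) * x)) ^ 2
      ≤ a n * (1 + (n : ℝ) ^ 2) := by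
    intro n
    have h1 : Real.sqrt (a n) ^ 2 = a n := Real.sq_sqrt (hpos n).le
    have h2 := Real.sin_sq_le_one ((n : ℝ) * x)
    have h3 : (0 : ℝ) ≤ a n * (n : ℝ) ^ 2 := mul_nonneg (hpos n).le (sq_nonneg _)
    have he : (Real.sqrt (a n) * (n : ℝ) * Real.sin ((n : ℝ) * x)) ^ 2
        = a n * (n : ℝ) ^ 2 * Real.sin ((n : ℝ) * x) ^ 2 := by
      rw [mul_pow, mul_pow, h1]
    rw [he]
    nlinarith [hpos n]
  have hg2sq : ∀ n : ℕ+, (Real.sqrt (a n) * (n : ℝ) * Real.cos ((n : ℝ) * x)) ^ 2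
      ≤ a n * (1 + (n : ℝ) ^ 2) := by
    intro n
    have h1 : Real.sqrt (a n) ^ 2 = a n := Real.sq_sqrt (hpos n).le
    have h2 := Real.cos_sq_le_one ((n : ℝ) * x)
    have h3 : (0 : ℝ) ≤ a n * (n : ℝ) ^ 2 := mul_nonneg (hpos n).le (sq_nonneg _)
    have he : (Real.sqrt (a n) * (n : ℝ) * Real.cos ((n : ℝ) * x)) ^ 2
        = a n * (n : ℝ) ^ 2 * Real.cos ((n : ℝ) * x) ^ 2 := by
      rw [mul_pow, mul_pow, h1]
    rw [he]
    nlinarith [hpos n]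
  set g1 : l2 := ⟨fun n => Real.sqrt (a n) * (n : ℝ) * Real.sin ((n : ℝ) * x),
    meml2_of_sq_summable _ (hS.of_nonneg_of_le (fun n => sq_nonneg _) hg1sq)⟩ with hg1
  set g2 : l2 := ⟨fun n => Real.sqrt (a n) * (n : ℝ) * Real.cos ((n : ℝ) * x),
    meml2_of_sq_summable _ (hS.of_nonneg_of_le (fun n => sq_nonneg _) hg2sq)⟩ with hg2
  set u : l2 := Hu z with hu
  set v : l2 := Hv z with hv
  have hxle : |Hx (F z)| ≤ K * ‖u‖ + K * ‖v‖ := by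
    have hsum1 : Summable fun n : ℕ+ => (g1 n : ℝ) * u n := (lp.summable_inner g1 u).congr fun n => mul_comm _ _
    have hsum2 : Summable fun n : ℕ+ => (g2 n : ℝ) * v n := (lp.summable_inner g2 v).congr fun n => mul_comm _ _
    have e1 : ⟪g1, u⟫ = ∑' n, (g1 n : ℝ) * u n := (lp.inner_eq_tsum g1 u).trans (tsum_congr fun n => mul_comm _ _)
    have e2 : ⟪g2, v⟫ = ∑' n, (g2 n : ℝ) * v n := (lp.inner_eq_tsum g2 v).trans (tsum_congr fun n => mul_comm _ _)
    have heq : Hx (F z) = ⟪g1, u⟫ + ⟪g2, v⟫ := by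
      calc Hx (F z) = ∑' n : ℕ+, ((g1 n : ℝ) * u n + (g2 n : ℝ) * v n) := by
            rw [hFx]
            refine tsum_congr fun n => ?_
            show _ = (Real.sqrt (a n) * (n : ℝ) * Real.sin ((n : ℝ) * x)) * u n
              + (Real.sqrt (a n) * (n : ℝ) * Real.cos ((n : ℝ) * x)) * v n
            ring
        _ = (∑' n : ℕ+, (g1 n : ℝ) * u n) + ∑' n : ℕ+, (g2 n : ℝ) * v n :=
            Summable.tsum_add hsum1 hsum2
        _ = ⟪g1, u⟫ + ⟪g2, v⟫ := by rw [e1, e2]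
    have hng1 : ‖g1‖ ≤ K := l2_norm_le g1 _ hS hg1sq
    have hng2 : ‖g2‖ ≤ K := l2_norm_le g2 _ hS hg2sq
    have hnu0 := norm_nonneg u
    have hnv0 := norm_nonneg v
    calc |Hx (F z)| = |⟪g1, u⟫ + ⟪g2, v⟫| := by rw [heq]
      _ ≤ |⟪g1, u⟫| + |⟪g2, v⟫| := abs_add_le _ _
      _ ≤ ‖g1‖ * ‖u‖ + ‖g2‖ * ‖v‖ :=
          add_le_add (abs_real_inner_le_norm _ _) (abs_real_inner_le_norm _ _)
      _ ≤ K * ‖u‖ + K * ‖v‖ := by nlinarith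
  have hnu : ‖Hu (F z)‖ ≤ K := by
    refine l2_norm_le (Hu (F z)) _ hS fun n => ?_
    rw [hFu n]
    have h1 : Real.sqrt (a n) ^ 2 = a n := Real.sq_sqrt (hpos n).le
    have h2 := Real.cos_sq_le_one ((n : ℝ) * x)
    have he : (Real.sqrt (a n) * Real.cos ((n : ℝ) * x)) ^ 2
        = a n * Real.cos ((n : ℝ) * x) ^ 2 := by rw [mul_pow, h1]
    rw [he]
    nlinarith [hpos n, sq_nonneg (n : ℝ)]
  have hnv : ‖Hv (F z)‖ ≤ K := by
    refine l2_norm_le (Hv (F z)) _ hS fun n => ?_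
    rw [hFv n]
    have h1 : Real.sqrt (a n) ^ 2 = a n := Real.sq_sqrt (hpos n).le
    have h2 := Real.sin_sq_le_one ((n : ℝ) * x)
    have he : (-(Real.sqrt (a n) * Real.sin ((n : ℝ) * x))) ^ 2
        = a n * Real.sin ((n : ℝ) * x) ^ 2 := by rw [neg_pow, mul_pow, h1]; ring
    rw [he]
    nlinarith [hpos n, sq_nonneg (n : ℝ)]
  have hcomp : ∀ w : Hsp, ‖w‖ ^ 2 = |Hx w| ^ 2 + ‖Hu w‖ ^ 2 + ‖Hv w‖ ^ 2 := by
    intro w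
    have e1 := WithLp.prod_norm_sq_eq_of_L2 w
    have e2 := WithLp.prod_norm_sq_eq_of_L2 w.snd
    rw [e1, e2]
    simp only [Hx, Hu, Hv, Real.norm_eq_abs]
    ring
  have hcz : ‖z‖ ^ 2 = |Hx z| ^ 2 + ‖u‖ ^ 2 + ‖v‖ ^ 2 := by
    rw [hu, hv]; exact hcomp z
  have hule : ‖u‖ ≤ ‖z‖ := by
    refine le_of_sq_le_sq' (norm_nonneg _) (norm_nonneg _) ?_
    rw [hcz]
    nlinarith [sq_nonneg (|Hx z|), sq_nonneg ‖v‖]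
  have hvle : ‖v‖ ≤ ‖z‖ := by
    refine le_of_sq_le_sq' (norm_nonneg _) (norm_nonneg _) ?_
    rw [hcz]
    nlinarith [sq_nonneg (|Hx z|), sq_nonneg ‖u‖]
  have hFz : ‖F z‖ ≤ 2 * K * ‖z‖ + 2 * K := by
    have h1 : ‖F z‖ ≤ |Hx (F z)| + ‖Hu (F z)‖ + ‖Hv (F z)‖ := by
      refine le_of_sq_le_sq' (norm_nonneg _) (by positivity) ?_
      rw [hcomp (F z)]
      nlinarith [abs_nonneg (Hx (F z)), norm_nonneg (Hu (F z)), norm_nonneg (Hv (F z)),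
        mul_nonneg (abs_nonneg (Hx (F z))) (norm_nonneg (Hu (F z))),
        mul_nonneg (abs_nonneg (Hx (F z))) (norm_nonneg (Hv (F z))),
        mul_nonneg (norm_nonneg (Hu (F z))) (norm_nonneg (Hv (F z)))]
    calc ‖F z‖ ≤ |Hx (F z)| + ‖Hu (F z)‖ + ‖Hv (F z)‖ := h1
      _ ≤ (K * ‖u‖ + K * ‖v‖) + K + K := by linarith
      _ ≤ 2 * K * ‖z‖ + 2 * K := by nlinarith [(mul_le_mul_of_nonneg_left hule hK0), (mul_le_mul_of_nonneg_left hvle hK0)]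
  have hCS : ⟪F z, ‖y‖⁻¹ • y⟫ ≤ ‖F z‖ := by
    have hy' : ‖y‖ ≠ 0 := norm_ne_zero_iff.mpr hy
    calc ⟪F z, ‖y‖⁻¹ • y⟫ ≤ ‖F z‖ * ‖‖y‖⁻¹ • y‖ := real_inner_le_norm _ _
      _ = ‖F z‖ := by
          rw [norm_smul, Real.norm_eq_abs, abs_of_nonneg (inv_nonneg.mpr (norm_nonneg y)),
            inv_mul_cancel₀ hy', mul_one]
  have hzn : ‖z‖ ≤ ‖y‖ + ‖ytil‖ := norm_add_le _ _
  have hyn := norm_nonneg y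
  have hyt := norm_nonneg ytil
  calc ⟪F z, ‖y‖⁻¹ • y⟫ ≤ ‖F z‖ := hCS
    _ ≤ 2 * K * ‖z‖ + 2 * K := hFz
    _ ≤ ((2 * K + 2) * (1 + ‖ytil‖)) * (1 + ‖y‖) := by
        nlinarith [(mul_nonneg hyt hyn), (mul_nonneg hK0 (mul_nonneg hyt hyn)), (mul_le_mul_of_nonneg_left hzn (by positivity : (0:ℝ) ≤ 2 * K))]
end
end

section
/- There exists a constant C > 0, depending only on the sequence (a_n)_{n≥1}, such that for all x, x̃ ∈ ℝ and all u, ũ, v, ṽ ∈ ℓ², |Σ_{n≥1} a_n^{1/2} n (sin(nx) u_n + cos(nx) v_n − sin(nx̃) ũ_n − cos(nx̃) ṽ_n)|² ≤ C (1 + ‖ũ‖_{ℓ²}² + ‖ṽ‖_{ℓ²}²) (|x − x̃|² + ‖u − ũ‖_{ℓ²}² + ‖v − ṽ‖_{ℓ²}²). -/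
noncomputable section

open scoped BigOperators ENNReal NNReal

open Real in
private theorem stmt6_sinlip (a b : ℝ) : |Real.sin a - Real.sin b| ≤ |a - b| := by
  rw [Real.sin_sub_sin]
  calc |2 * sin ((a-b)/2) * cos ((a+b)/2)| = 2 * |sin ((a-b)/2)| * |cos ((a+b)/2)| := by
        rw [abs_mul, abs_mul]; norm_num
    _ ≤ 2 * |(a-b)/2| * 1 :=
        mul_le_mul (by have := Real.abs_sin_le_abs (x := (a-b)/2); linarith)
          (Real.abs_cos_le_one _) (abs_nonneg _) (by positivity)
    _ = |a - b| := by rw [abs_div, abs_two]; ring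

open Real in
private theorem stmt6_coslip (a b : ℝ) : |Real.cos a - Real.cos b| ≤ |a - b| := by
  rw [Real.cos_sub_cos]
  calc |-2 * sin ((a+b)/2) * sin ((a-b)/2)| = 2 * |sin ((a+b)/2)| * |sin ((a-b)/2)| := by
        rw [abs_mul, abs_mul]; norm_num
    _ ≤ 2 * 1 * |(a-b)/2| :=
        mul_le_mul (by have := Real.abs_sin_le_one ((a+b)/2); linarith)
          Real.abs_sin_le_abs (abs_nonneg _) (by positivity)
    _ = |a - b| := by rw [abs_div, abs_two]; ring

private theorem stmt6_master (a : ℕ+ → ℝ) (hpos : ∀ n, 0 < a n)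
    (hO5 : Summable fun n : ℕ+ => (1 + (n : ℝ) ^ 2) ^ 5 * a n ^ 2) :
    Summable (fun n : ℕ+ => a n * (n:ℝ)^4) := by
  have hinvN : Summable (fun n : ℕ => 1/(n:ℝ)^2) := by
    simpa using Real.summable_one_div_nat_pow.2 (by norm_num)
  have hinv : Summable (fun n : ℕ+ => 1/((n:ℕ):ℝ)^2) :=
    hinvN.comp_injective PNat.coe_injective
  refine Summable.of_nonneg_of_le
    (fun n => mul_nonneg (hpos n).le (by positivity))
    (fun n => ?_) (((hO5.add hinv).div_const 2))
  have hcast : ((n:ℕ):ℝ) = (n:ℝ) := by norm_cast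
  have ht : (1:ℝ) ≤ (n:ℝ) := by rw [← hcast]; exact_mod_cast n.one_le
  set t : ℝ := (n:ℝ) with htdef
  have htpos : 0 < t := lt_of_lt_of_le one_pos ht
  have h1 : a n*t^5*(1/t) = a n*t^4 := by field_simp
  have h2 : 2*(a n*t^4) ≤ (a n)^2*t^10 + (1/t)^2 := by
    nlinarith [sq_nonneg (a n*t^5 - 1/t), h1]
  have h3 : t^10 ≤ (1+t^2)^5 := by
    calc t^10 = (t^2)^5 := by ring
      _ ≤ (1+t^2)^5 := by gcongr <;> nlinarith
  have h4 : (a n)^2*t^10 ≤ (a n)^2*(1+t^2)^5 := by nlinarith [sq_nonneg (a n)]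
  have h5 : (1/t)^2 = 1/((n:ℕ):ℝ)^2 := by rw [hcast]; ring
  rw [hcast]
  linarith [h2, h4, h5.le, h5.ge]

private theorem stmt6_mem2 {w b : ℕ+ → ℝ} (hb : Summable b) (hw : ∀ n, w n^2 ≤ b n) :
    Memℓp w 2 := by
  apply memℓp_gen
  have h : ∀ n : ℕ+, ‖w n‖ ^ (2:ℝ≥0∞).toReal = w n ^ 2 := by
    intro n
    have : ((2:ℝ≥0∞) : ℝ≥0∞).toReal = ((2:ℕ):ℝ) := by simp
    rw [this, Real.rpow_natCast, Real.norm_eq_abs, sq_abs]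
  simp_rw [h]
  exact Summable.of_nonneg_of_le (fun n => sq_nonneg _) hw hb

private theorem stmt6_norm_sq_le {w b : ℕ+ → ℝ} (hb : Summable b)
    (hw : ∀ n, w n^2 ≤ b n) :
    ‖(⟨w, stmt6_mem2 hb hw⟩ : l2)‖^2 ≤ ∑' n, b n := by
  set f : l2 := ⟨w, stmt6_mem2 hb hw⟩
  have h1 : ‖f‖^2 = ∑' n, w n * w n := by
    rw [← real_inner_self_eq_norm_sq, lp.inner_eq_tsum]
    rfl
  rw [h1]
  refine Summable.tsum_le_tsum (fun n => by nlinarith [hw n]) ?_ hb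
  exact (lp.hasSum_inner f f).summable

private theorem stmt6_inner_form (w : ℕ+ → ℝ) (hw : Memℓp w 2) (g : l2) :
    HasSum (fun n => w n * g n) (inner (𝕜 := ℝ) (⟨w, hw⟩ : l2) g) := by
  have := lp.hasSum_inner (𝕜 := ℝ) (⟨w, hw⟩ : l2) g
  convert this using 2
  · rfl
  · simp [RCLike.inner_apply, mul_comm]

set_option maxHeartbeats 1000000 in
/-- There is a constant `C > 0`, depending only on `(aₙ)`, such that
for all `x, x̃ ∈ ℝ` and `u, ũ, v, ṽ ∈ ℓ²`,
`|Σ √aₙ n (sin(nx)uₙ + cos(nx)vₙ − sin(nx̃)ũₙ − cos(nx̃)ṽₙ)|²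
  ≤ C (1 + ‖ũ‖² + ‖ṽ‖²)(|x − x̃|² + ‖u − ũ‖² + ‖v − ṽ‖²)`. -/
theorem stmt6 (a : ℕ+ → ℝ) (hpos : ∀ n, 0 < a n)
    (hO5 : Summable fun n : ℕ+ => (1 + (n : ℝ) ^ 2) ^ 5 * a n ^ 2) :
    ∃ C > (0 : ℝ), ∀ (x xtil : ℝ) (u util v vtil : l2),
      |∑' n : ℕ+, Real.sqrt (a n) * (n : ℝ) *
          (Real.sin ((n : ℝ) * x) * u n + Real.cos ((n : ℝ) * x) * v n
            - Real.sin ((n : ℝ) * xtil) * util n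
            - Real.cos ((n : ℝ) * xtil) * vtil n)| ^ 2 ≤
        C * (1 + ‖util‖ ^ 2 + ‖vtil‖ ^ 2) *
          (|x - xtil| ^ 2 + ‖u - util‖ ^ 2 + ‖v - vtil‖ ^ 2) := by
  have hB := stmt6_master a hpos hO5
  set B : ℝ := ∑' n : ℕ+, a n * (n:ℝ)^4 with hBdef
  have hBnn : 0 ≤ B := tsum_nonneg (fun n => mul_nonneg (hpos n).le (by positivity))
  refine ⟨4*(B+1), by positivity, ?_⟩
  intro x xtil u util v vtil
  -- basic facts
  have hn1 : ∀ n : ℕ+, (1:ℝ) ≤ (n:ℝ) := by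
    intro n
    have : ((n:ℕ):ℝ) = (n:ℝ) := by norm_cast
    rw [← this]; exact_mod_cast n.one_le
  have hsq : ∀ n : ℕ+, Real.sqrt (a n) ^ 2 = a n := fun n => Real.sq_sqrt (hpos n).le
  -- coefficient sequences
  set w1 : ℕ+ → ℝ := fun n => Real.sqrt (a n) * (n:ℝ) * Real.sin ((n:ℝ)*x) with hw1def
  set w2 : ℕ+ → ℝ := fun n => Real.sqrt (a n) * (n:ℝ) * Real.cos ((n:ℝ)*x) with hw2def
  set w3 : ℕ+ → ℝ := fun n => Real.sqrt (a n) * (n:ℝ) *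
      (Real.sin ((n:ℝ)*x) - Real.sin ((n:ℝ)*xtil)) with hw3def
  set w4 : ℕ+ → ℝ := fun n => Real.sqrt (a n) * (n:ℝ) *
      (Real.cos ((n:ℝ)*x) - Real.cos ((n:ℝ)*xtil)) with hw4def
  have hbgen : ∀ (s : ℝ) (n : ℕ+), s^2 ≤ 1 →
      (Real.sqrt (a n) * (n:ℝ) * s)^2 ≤ a n * (n:ℝ)^4 := by
    intro s n hs2
    have h1 := hn1 n
    have h2 := hsq n
    have h3 := (hpos n).le
    have ht2 : (1:ℝ) ≤ (n:ℝ)^2 := by nlinarith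
    have hst : s^2 ≤ (n:ℝ)^2 := le_trans hs2 ht2
    calc (Real.sqrt (a n) * (n:ℝ) * s)^2
        = a n * ((n:ℝ)^2 * s^2) := by rw [mul_pow, mul_pow, h2]; ring
      _ ≤ a n * ((n:ℝ)^2 * (n:ℝ)^2) := by gcongr
      _ = a n * (n:ℝ)^4 := by ring
  have hb1 : ∀ n, w1 n ^ 2 ≤ a n * (n:ℝ)^4 := fun n =>
    hbgen _ n (Real.sin_sq_le_one _)
  have hb2 : ∀ n, w2 n ^ 2 ≤ a n * (n:ℝ)^4 := fun n =>
    hbgen _ n (Real.cos_sq_le_one _)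
  have hBd : Summable (fun n : ℕ+ => a n * (n:ℝ)^4 * (x - xtil)^2) := hB.mul_right _
  have hBdval : ∑' n : ℕ+, a n * (n:ℝ)^4 * (x - xtil)^2 = B * (x - xtil)^2 :=
    tsum_mul_right
  have hdiff_sq : ∀ (s t : ℝ) (n : ℕ+), |s - t| ≤ |(n:ℝ)*x - (n:ℝ)*xtil| →
      (s - t)^2 ≤ (n:ℝ)^2 * (x - xtil)^2 := by
    intro s t n h
    have h2 : |s - t|^2 ≤ |(n:ℝ)*x - (n:ℝ)*xtil|^2 :=
      pow_le_pow_left₀ (abs_nonneg _) h 2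
    rw [sq_abs, sq_abs] at h2
    calc (s - t)^2 ≤ ((n:ℝ)*x - (n:ℝ)*xtil)^2 := h2
      _ = (n:ℝ)^2 * (x - xtil)^2 := by ring
  have hbgen2 : ∀ (d : ℝ) (n : ℕ+), d^2 ≤ (n:ℝ)^2 * (x - xtil)^2 →
      (Real.sqrt (a n) * (n:ℝ) * d)^2 ≤ a n * (n:ℝ)^4 * (x - xtil)^2 := by
    intro d n hd
    have h2 := hsq n
    have h3 := (hpos n).le
    calc (Real.sqrt (a n) * (n:ℝ) * d)^2
        = a n * ((n:ℝ)^2 * d^2) := by rw [mul_pow, mul_pow, h2]; ring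
      _ ≤ a n * ((n:ℝ)^2 * ((n:ℝ)^2 * (x - xtil)^2)) := by gcongr
      _ = a n * (n:ℝ)^4 * (x - xtil)^2 := by ring
  have hb3 : ∀ n, w3 n ^ 2 ≤ a n * (n:ℝ)^4 * (x - xtil)^2 := fun n =>
    hbgen2 _ n (hdiff_sq _ _ n (stmt6_sinlip ((n:ℝ)*x) ((n:ℝ)*xtil)))
  have hb4 : ∀ n, w4 n ^ 2 ≤ a n * (n:ℝ)^4 * (x - xtil)^2 := fun n =>
    hbgen2 _ n (hdiff_sq _ _ n (stmt6_coslip ((n:ℝ)*x) ((n:ℝ)*xtil)))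
  -- l2 elements
  set W1 : l2 := ⟨w1, stmt6_mem2 hB hb1⟩ with hW1
  set W2 : l2 := ⟨w2, stmt6_mem2 hB hb2⟩ with hW2
  set W3 : l2 := ⟨w3, stmt6_mem2 hBd hb3⟩ with hW3
  set W4 : l2 := ⟨w4, stmt6_mem2 hBd hb4⟩ with hW4
  have hN1 : ‖W1‖^2 ≤ B := stmt6_norm_sq_le hB hb1
  have hN2 : ‖W2‖^2 ≤ B := stmt6_norm_sq_le hB hb2
  have hN3 : ‖W3‖^2 ≤ B * (x - xtil)^2 := by
    have := stmt6_norm_sq_le hBd hb3; rwa [hBdval] at this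
  have hN4 : ‖W4‖^2 ≤ B * (x - xtil)^2 := by
    have := stmt6_norm_sq_le hBd hb4; rwa [hBdval] at this
  -- the sum equals a combination of inner products
  set I1 : ℝ := inner (𝕜 := ℝ) W1 (u - util) with hI1
  set I2 : ℝ := inner (𝕜 := ℝ) W2 (v - vtil) with hI2
  set I3 : ℝ := inner (𝕜 := ℝ) W3 util with hI3
  set I4 : ℝ := inner (𝕜 := ℝ) W4 vtil with hI4
  have hsum : HasSum (fun n : ℕ+ => (w1 n * (u - util) n + w2 n * (v - vtil) n)
      + (w3 n * util n + w4 n * vtil n)) ((I1 + I2) + (I3 + I4)) :=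
    ((stmt6_inner_form w1 _ (u - util)).add (stmt6_inner_form w2 _ (v - vtil))).add
      ((stmt6_inner_form w3 _ util).add (stmt6_inner_form w4 _ vtil))
  have hfun : (fun n : ℕ+ => Real.sqrt (a n) * (n : ℝ) *
      (Real.sin ((n : ℝ) * x) * u n + Real.cos ((n : ℝ) * x) * v n
        - Real.sin ((n : ℝ) * xtil) * util n
        - Real.cos ((n : ℝ) * xtil) * vtil n)) =
      (fun n : ℕ+ => (w1 n * (u - util) n + w2 n * (v - vtil) n)
      + (w3 n * util n + w4 n * vtil n)) := by
    funext n
    have h1 : (u - util) n = u n - util n := by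
      rw [lp.coeFn_sub]; rfl
    have h2 : (v - vtil) n = v n - vtil n := by
      rw [lp.coeFn_sub]; rfl
    simp only [hw1def, hw2def, hw3def, hw4def, h1, h2]
    ring
  have htsum : (∑' n : ℕ+, Real.sqrt (a n) * (n : ℝ) *
      (Real.sin ((n : ℝ) * x) * u n + Real.cos ((n : ℝ) * x) * v n
        - Real.sin ((n : ℝ) * xtil) * util n
        - Real.cos ((n : ℝ) * xtil) * vtil n)) = (I1 + I2) + (I3 + I4) := by
    rw [hfun]; exact hsum.tsum_eq
  rw [htsum]
  -- Cauchy-Schwarz bounds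
  have hcs1 : |I1| ≤ ‖W1‖ * ‖u - util‖ := abs_real_inner_le_norm _ _
  have hcs2 : |I2| ≤ ‖W2‖ * ‖v - vtil‖ := abs_real_inner_le_norm _ _
  have hcs3 : |I3| ≤ ‖W3‖ * ‖util‖ := abs_real_inner_le_norm _ _
  have hcs4 : |I4| ≤ ‖W4‖ * ‖vtil‖ := abs_real_inner_le_norm _ _
  set T : ℝ := ‖W1‖ * ‖u - util‖ + ‖W2‖ * ‖v - vtil‖ + ‖W3‖ * ‖util‖ + ‖W4‖ * ‖vtil‖
    with hT
  have hTnn : 0 ≤ T := by positivity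
  have habs : |(I1 + I2) + (I3 + I4)| ≤ T := by
    calc |(I1 + I2) + (I3 + I4)| ≤ |I1| + |I2| + |I3| + |I4| := by
          calc |(I1 + I2) + (I3 + I4)| ≤ |I1 + I2| + |I3 + I4| := abs_add_le _ _
            _ ≤ (|I1| + |I2|) + (|I3| + |I4|) :=
                add_le_add (abs_add_le _ _) (abs_add_le _ _)
            _ = |I1| + |I2| + |I3| + |I4| := by ring
      _ ≤ T := by rw [hT]; linarith
  have hsq2 : |(I1 + I2) + (I3 + I4)|^2 ≤ T^2 :=
    pow_le_pow_left₀ (abs_nonneg _) habs 2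
  refine le_trans hsq2 ?_
  -- final algebraic bound
  have hT2 : T^2 ≤ 4 * ((‖W1‖ * ‖u - util‖)^2 + (‖W2‖ * ‖v - vtil‖)^2
      + (‖W3‖ * ‖util‖)^2 + (‖W4‖ * ‖vtil‖)^2) := by
    rw [hT]
    nlinarith [sq_nonneg (‖W1‖ * ‖u - util‖ - ‖W2‖ * ‖v - vtil‖),
      sq_nonneg (‖W1‖ * ‖u - util‖ - ‖W3‖ * ‖util‖),
      sq_nonneg (‖W1‖ * ‖u - util‖ - ‖W4‖ * ‖vtil‖),
      sq_nonneg (‖W2‖ * ‖v - vtil‖ - ‖W3‖ * ‖util‖),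
      sq_nonneg (‖W2‖ * ‖v - vtil‖ - ‖W4‖ * ‖vtil‖),
      sq_nonneg (‖W3‖ * ‖util‖ - ‖W4‖ * ‖vtil‖)]
  refine le_trans hT2 ?_
  have e1 : (‖W1‖ * ‖u - util‖)^2 ≤ B * ‖u - util‖^2 := by
    rw [mul_pow]; exact mul_le_mul_of_nonneg_right hN1 (sq_nonneg _)
  have e2 : (‖W2‖ * ‖v - vtil‖)^2 ≤ B * ‖v - vtil‖^2 := by
    rw [mul_pow]; exact mul_le_mul_of_nonneg_right hN2 (sq_nonneg _)
  have e3 : (‖W3‖ * ‖util‖)^2 ≤ B * (x - xtil)^2 * ‖util‖^2 := by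
    rw [mul_pow]; exact mul_le_mul_of_nonneg_right hN3 (sq_nonneg _)
  have e4 : (‖W4‖ * ‖vtil‖)^2 ≤ B * (x - xtil)^2 * ‖vtil‖^2 := by
    rw [mul_pow]; exact mul_le_mul_of_nonneg_right hN4 (sq_nonneg _)
  have hxx : |x - xtil|^2 = (x - xtil)^2 := sq_abs _
  rw [hxx]
  set U : ℝ := ‖util‖
  set V : ℝ := ‖vtil‖
  set E : ℝ := ‖u - util‖
  set F : ℝ := ‖v - vtil‖
  set D : ℝ := x - xtil
  have key : B*E^2 + B*F^2 + B*D^2*U^2 + B*D^2*V^2 ≤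
      (B+1)*(1+U^2+V^2)*(D^2+E^2+F^2) := by
    have expand : (B+1)*(1+U^2+V^2)*(D^2+E^2+F^2) =
        (B*E^2 + B*F^2 + B*D^2*U^2 + B*D^2*V^2) +
        (B*D^2 + B*U^2*E^2 + B*U^2*F^2 + B*V^2*E^2 + B*V^2*F^2
          + (1+U^2+V^2)*(D^2+E^2+F^2)) := by ring
    have rem : 0 ≤ B*D^2 + B*U^2*E^2 + B*U^2*F^2 + B*V^2*E^2 + B*V^2*F^2
        + (1+U^2+V^2)*(D^2+E^2+F^2) := by positivity
    linarith [expand.le, expand.ge]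
  have e1' : (‖W1‖ * E)^2 ≤ B * E^2 := by
    rw [mul_pow]; exact mul_le_mul_of_nonneg_right hN1 (sq_nonneg _)
  have e2' : (‖W2‖ * F)^2 ≤ B * F^2 := by
    rw [mul_pow]; exact mul_le_mul_of_nonneg_right hN2 (sq_nonneg _)
  have e3' : (‖W3‖ * U)^2 ≤ B * D^2 * U^2 := by
    rw [mul_pow]; exact mul_le_mul_of_nonneg_right hN3 (sq_nonneg _)
  have e4' : (‖W4‖ * V)^2 ≤ B * D^2 * V^2 := by
    rw [mul_pow]; exact mul_le_mul_of_nonneg_right hN4 (sq_nonneg _)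
  calc 4 * ((‖W1‖ * E)^2 + (‖W2‖ * F)^2 + (‖W3‖ * U)^2 + (‖W4‖ * V)^2)
      ≤ 4 * (B*E^2 + B*F^2 + B*D^2*U^2 + B*D^2*V^2) := by linarith
    _ ≤ 4 * ((B+1)*(1+U^2+V^2)*(D^2+E^2+F^2)) := by linarith
    _ = 4*(B+1) * (1 + U^2 + V^2) * (D^2 + E^2 + F^2) := by ring
end
end

section
/- Let w : [0,∞) → ℝ be continuous, y ∈ H, let Y be the continuous H-valued solution of Y(t) = y + ∫₀ᵗ F(Y(s)) ds + (w(t),0,0), and for each N ≥ 1 let Y^{(N)} be the continuous H-valued solution of Y^{(N)}(t) = Π_N y + ∫₀ᵗ Π_N F(Y^{(N)}(s)) ds + (w(t),0,0). Then for every T > 0, there exist constants C > 0 and C(y,T) > 0 (depending only on (a_n), y and T) such that sup_{0≤t≤T} ‖Y^{(N)}(t) − Y(t)‖_H² ≤ (‖Π_N y − y‖_H² + C T Σ_{n>N} a_n) e^{C(y,T)}; in particular sup_{0≤t≤T} ‖Y^{(N)}(t) − Y(t)‖_H → 0 as N → ∞. -/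
noncomputable section

open scoped BigOperators RealInnerProductSpace ENNReal NNReal
open MeasureTheory Filter

/-- The Galerkin projections `Π_N (x,(uₙ)ₙ,(vₙ)ₙ) = (x,(u₁,…,u_N,0,…),(v₁,…,v_N,0,…))`. -/
def IsGalerkin (P : ℕ+ → Hsp → Hsp) : Prop :=
  ∀ (N : ℕ+) (y : Hsp),
    Hx (P N y) = Hx y ∧
    (∀ n : ℕ+, Hu (P N y) n = if n ≤ N then Hu y n else 0) ∧
    (∀ n : ℕ+, Hv (P N y) n = if n ≤ N then Hv y n else 0)

namespace Stmt11Aux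


lemma summable_abs_mul {f g : ℕ+ → ℝ} (hf : Summable fun n => f n ^ 2)
    (hg : Summable fun n => g n ^ 2) : Summable fun n => |f n * g n| := by
  refine Summable.of_nonneg_of_le (fun n => abs_nonneg _) (fun n => ?_)
    (((hf.add hg).mul_left (1/2 : ℝ)))
  have h := sq_nonneg (|f n| - |g n|)
  rw [abs_mul]
  nlinarith [sq_abs (f n), sq_abs (g n)]

lemma tsum_abs_mul_le {f g : ℕ+ → ℝ} (hf : Summable fun n => f n ^ 2)
    (hg : Summable fun n => g n ^ 2) :
    ∑' n, |f n * g n| ≤ Real.sqrt (∑' n, f n ^ 2) * Real.sqrt (∑' n, g n ^ 2) := by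
  have hF : (0:ℝ) ≤ ∑' n, f n ^ 2 := tsum_nonneg fun n => sq_nonneg _
  have hG : (0:ℝ) ≤ ∑' n, g n ^ 2 := tsum_nonneg fun n => sq_nonneg _
  refine Summable.tsum_le_of_sum_le (summable_abs_mul hf hg) (fun s => ?_)
  have h1 : (∑ n ∈ s, |f n * g n|) ^ 2 ≤ (∑ n ∈ s, f n ^ 2) * ∑ n ∈ s, g n ^ 2 := by
    have := Finset.sum_mul_sq_le_sq_mul_sq s (fun n => |f n|) (fun n => |g n|)
    simpa [← abs_mul, sq_abs] using this
  have h2 : (∑ n ∈ s, f n ^ 2) ≤ ∑' n, f n ^ 2 := Summable.sum_le_tsum s (by intros; positivity) hf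
  have h3 : (∑ n ∈ s, g n ^ 2) ≤ ∑' n, g n ^ 2 := Summable.sum_le_tsum s (by intros; positivity) hg
  have h4 : (∑ n ∈ s, |f n * g n|) ^ 2 ≤ (∑' n, f n ^ 2) * ∑' n, g n ^ 2 := by
    refine h1.trans (mul_le_mul h2 h3 (Finset.sum_nonneg (by intros; positivity)) hF)
  calc ∑ n ∈ s, |f n * g n| = Real.sqrt ((∑ n ∈ s, |f n * g n|) ^ 2) := by
        rw [Real.sqrt_sq (Finset.sum_nonneg (by intros; positivity))]
    _ ≤ Real.sqrt ((∑' n, f n ^ 2) * ∑' n, g n ^ 2) := Real.sqrt_le_sqrt h4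
    _ = _ := Real.sqrt_mul hF _

lemma l2_summable_sq (u : l2) : Summable fun n => (u n) ^ 2 := by
  have h := lp.memℓp u
  rw [memℓp_gen_iff (by norm_num : (0:ℝ) < (2:ℝ≥0∞).toReal)] at h
  simpa [Real.norm_eq_abs, ENNReal.toReal_ofNat, Real.rpow_natCast, sq_abs] using h

lemma l2_norm_sq (u : l2) : ‖u‖ ^ 2 = ∑' n, (u n) ^ 2 := by
  have h := lp.norm_rpow_eq_tsum (by norm_num : (0:ℝ) < (2:ℝ≥0∞).toReal) u
  simpa [Real.norm_eq_abs, Real.rpow_natCast, sq_abs] using h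

lemma H_norm_sq (z : Hsp) : ‖z‖ ^ 2 = (Hx z) ^ 2 + ‖Hu z‖ ^ 2 + ‖Hv z‖ ^ 2 := by
  rw [WithLp.prod_norm_sq_eq_of_L2, WithLp.prod_norm_sq_eq_of_L2]
  simp only [Hx, Hu, Hv, Real.norm_eq_abs, sq_abs]
  ring



lemma Hx_add (p q : Hsp) : Hx (p + q) = Hx p + Hx q := rfl
lemma Hx_sub (p q : Hsp) : Hx (p - q) = Hx p - Hx q := rfl
lemma Hu_add (p q : Hsp) : Hu (p + q) = Hu p + Hu q := rfl
lemma Hu_sub (p q : Hsp) : Hu (p - q) = Hu p - Hu q := rfl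
lemma Hv_add (p q : Hsp) : Hv (p + q) = Hv p + Hv q := rfl
lemma Hv_sub (p q : Hsp) : Hv (p - q) = Hv p - Hv q := rfl
lemma Hx_mkH (x : ℝ) (u v : l2) : Hx (mkH x u v) = x := rfl
lemma Hu_mkH (x : ℝ) (u v : l2) : Hu (mkH x u v) = u := rfl
lemma Hv_mkH (x : ℝ) (u v : l2) : Hv (mkH x u v) = v := rfl

lemma l2_apply_sub (u v : l2) (n : ℕ+) : (u - v) n = u n - v n := by
  simp [lp.coeFn_sub]

def HxL : Hsp →L[ℝ] ℝ :=
  (ContinuousLinearMap.fst ℝ ℝ (WithLp 2 (l2 × l2))).comp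
    (WithLp.prodContinuousLinearEquiv 2 ℝ ℝ (WithLp 2 (l2 × l2))).toContinuousLinearMap

def HuL : Hsp →L[ℝ] l2 :=
  ((ContinuousLinearMap.fst ℝ l2 l2).comp
    (WithLp.prodContinuousLinearEquiv 2 ℝ l2 l2).toContinuousLinearMap).comp
  ((ContinuousLinearMap.snd ℝ ℝ (WithLp 2 (l2 × l2))).comp
    (WithLp.prodContinuousLinearEquiv 2 ℝ ℝ (WithLp 2 (l2 × l2))).toContinuousLinearMap)

def HvL : Hsp →L[ℝ] l2 :=
  ((ContinuousLinearMap.snd ℝ l2 l2).comp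
    (WithLp.prodContinuousLinearEquiv 2 ℝ l2 l2).toContinuousLinearMap).comp
  ((ContinuousLinearMap.snd ℝ ℝ (WithLp 2 (l2 × l2))).comp
    (WithLp.prodContinuousLinearEquiv 2 ℝ ℝ (WithLp 2 (l2 × l2))).toContinuousLinearMap)

lemma HxL_apply (z : Hsp) : HxL z = Hx z := rfl
lemma HuL_apply (z : Hsp) : HuL z = Hu z := rfl
lemma HvL_apply (z : Hsp) : HvL z = Hv z := rfl


lemma abs_Hx_le (z : Hsp) : |Hx z| ≤ ‖z‖ := by
  nlinarith [H_norm_sq z, norm_nonneg z, norm_nonneg (Hu z), norm_nonneg (Hv z),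
    sq_abs (Hx z), abs_nonneg (Hx z)]
lemma norm_Hu_le (z : Hsp) : ‖Hu z‖ ≤ ‖z‖ := by
  nlinarith [H_norm_sq z, norm_nonneg z, norm_nonneg (Hu z), norm_nonneg (Hv z), sq_nonneg (Hx z)]
lemma norm_Hv_le (z : Hsp) : ‖Hv z‖ ≤ ‖z‖ := by
  nlinarith [H_norm_sq z, norm_nonneg z, norm_nonneg (Hu z), norm_nonneg (Hv z), sq_nonneg (Hx z)]
lemma H_norm_le (z : Hsp) : ‖z‖ ≤ |Hx z| + ‖Hu z‖ + ‖Hv z‖ := by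
  nlinarith [H_norm_sq z, norm_nonneg z, norm_nonneg (Hu z), norm_nonneg (Hv z),
    sq_abs (Hx z), abs_nonneg (Hx z), mul_nonneg (abs_nonneg (Hx z)) (norm_nonneg (Hu z)),
    mul_nonneg (abs_nonneg (Hx z)) (norm_nonneg (Hv z)),
    mul_nonneg (norm_nonneg (Hu z)) (norm_nonneg (Hv z))]

lemma exp_sub_one_le (x : ℝ) (hx : 0 ≤ x) : Real.exp x - 1 ≤ x * Real.exp x := by
  have h := Real.add_one_le_exp (-x)
  have h2 : Real.exp (-x) * Real.exp x = 1 := by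
    rw [← Real.exp_add]; simp
  nlinarith [Real.exp_pos x]

lemma gronwallBound_le {δ K ε t T : ℝ} (hδ : 0 ≤ δ) (hK : 1 ≤ K) (hε : 0 ≤ ε)
    (ht : 0 ≤ t) (htT : t ≤ T) :
    gronwallBound δ K ε t ≤ (δ + ε * T) * Real.exp (K * T) := by
  have hK0 : K ≠ 0 := by linarith
  rw [gronwallBound_of_K_ne_0 hK0]
  have hKt : K * t ≤ K * T := by nlinarith
  have he : Real.exp (K * t) ≤ Real.exp (K * T) := Real.exp_le_exp.2 hKt
  have h1 : Real.exp (K * t) - 1 ≤ (K * t) * Real.exp (K * t) :=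
    exp_sub_one_le (K * t) (by nlinarith)
  have h2 : ε / K * (Real.exp (K * t) - 1) ≤ ε * T * Real.exp (K * T) := by
    have hKpos : (0:ℝ) < K := by linarith
    have : ε / K * (Real.exp (K * t) - 1) ≤ ε / K * ((K * t) * Real.exp (K * t)) := by
      apply mul_le_mul_of_nonneg_left h1 (by positivity)
    calc ε / K * (Real.exp (K * t) - 1) ≤ ε / K * ((K * t) * Real.exp (K * t)) := this
      _ = ε * t * Real.exp (K * t) := by field_simp
      _ ≤ ε * T * Real.exp (K * T) := by
          apply mul_le_mul (by nlinarith) he (Real.exp_pos _).le (by nlinarith)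
  have h3 : δ * Real.exp (K * t) ≤ δ * Real.exp (K * T) :=
    mul_le_mul_of_nonneg_left he hδ
  nlinarith [Real.exp_pos (K*T)]

lemma summable_inv_sq_pnat : Summable fun n : ℕ+ => (1 : ℝ) / (n : ℝ) ^ 2 := by
  have h : Summable fun n : ℕ => (1 : ℝ) / (n : ℝ) ^ 2 := by
    simpa using Real.summable_one_div_nat_pow.2 (by norm_num : 1 < 2)
  have := h.comp_injective (fun a b hab => PNat.coe_injective hab :
    Function.Injective (fun n : ℕ+ => (n : ℕ)))
  exact this

lemma tendsto_tail_zero {c : ℕ+ → ℝ} (hc : Summable c) (h0 : ∀ n, 0 ≤ c n) :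
    Tendsto (fun N : ℕ+ => ∑' n : ℕ+, if N < n then c n else 0) atTop (nhds 0) := by
  have key : ∀ N : ℕ+, (∑' n : ℕ+, if N < n then c n else 0)
      = (∑' n, c n) - ∑ n ∈ Finset.Iic N, c n := by
    intro N
    have hsupp : ∀ n ∉ Finset.Iic N, (if n ≤ N then c n else 0) = 0 := by
      intro n hn; rw [if_neg]; simpa using hn
    have hs2 : Summable (fun n : ℕ+ => if n ≤ N then c n else 0) :=
      summable_of_ne_finset_zero hsupp
    have h1 : (∑' n : ℕ+, if n ≤ N then c n else 0) = ∑ n ∈ Finset.Iic N, c n := by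
      rw [tsum_eq_sum hsupp]
      exact Finset.sum_congr rfl (fun n hn => if_pos (Finset.mem_Iic.1 hn))
    have h2 : ∀ n : ℕ+, (if N < n then c n else 0) = c n - (if n ≤ N then c n else 0) := by
      intro n
      by_cases h : n ≤ N
      · rw [if_neg (not_lt.2 h), if_pos h]; ring
      · rw [if_pos (not_le.1 h), if_neg h]; ring
    calc (∑' n : ℕ+, if N < n then c n else 0)
        = ∑' n : ℕ+, (c n - (if n ≤ N then c n else 0)) := by
          exact tsum_congr h2
      _ = (∑' n, c n) - ∑' n : ℕ+, (if n ≤ N then c n else 0) := Summable.tsum_sub hc hs2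
      _ = (∑' n, c n) - ∑ n ∈ Finset.Iic N, c n := by rw [h1]
  simp only [key]
  have hIic : Tendsto (fun N : ℕ+ => Finset.Iic N) atTop atTop := by
    rw [Filter.tendsto_atTop]
    intro s
    obtain ⟨M, hM⟩ := s.exists_le
    filter_upwards [Filter.eventually_ge_atTop M] with N hN
    intro x hx
    exact Finset.mem_Iic.2 ((hM x hx).trans hN)
  have := (hc.hasSum.comp hIic).sub (tendsto_const_nhds (x := ∑' n, c n))
  simpa using (tendsto_const_nhds (x := ∑' n, c n)).sub (hc.hasSum.comp hIic)

lemma l2_norm_le_of_sq_le {p : l2} {c : ℕ+ → ℝ} (hc : Summable c)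
    (h : ∀ n, (p n) ^ 2 ≤ c n) : ‖p‖ ≤ Real.sqrt (∑' n, c n) := by
  have h1 : ‖p‖ ^ 2 ≤ ∑' n, c n := by
    rw [l2_norm_sq]
    exact Summable.tsum_le_tsum h (l2_summable_sq p) hc
  calc ‖p‖ = Real.sqrt (‖p‖ ^ 2) := (Real.sqrt_sq (norm_nonneg p)).symm
    _ ≤ Real.sqrt (∑' n, c n) := Real.sqrt_le_sqrt h1

lemma summable_a_mul {a : ℕ+ → ℝ} (hpos : ∀ n, 0 < a n) (hO5 : MemO5 a)
    (k : ℕ) (hk : k ≤ 4) : Summable fun n : ℕ+ => a n * (n : ℝ) ^ k := by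
  set f : ℕ+ → ℝ := fun n => Real.sqrt ((1 + (n : ℝ) ^ 2) ^ 5) * a n with hf
  set g : ℕ+ → ℝ := fun n => (n : ℝ) ^ k / Real.sqrt ((1 + (n : ℝ) ^ 2) ^ 5) with hg
  have hEpos : ∀ n : ℕ+, (0 : ℝ) < (1 + (n : ℝ) ^ 2) ^ 5 := by
    intro n; positivity
  have hfs : Summable fun n => f n ^ 2 := by
    have : ∀ n : ℕ+, f n ^ 2 = (1 + (n : ℝ) ^ 2) ^ 5 * a n ^ 2 := by
      intro n
      simp only [hf, mul_pow, Real.sq_sqrt (hEpos n).le]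
    simpa only [this, MemO5] using hO5
  have hgs : Summable fun n => g n ^ 2 := by
    apply Summable.of_nonneg_of_le (fun n => sq_nonneg _) _ summable_inv_sq_pnat
    intro n
    have hn1 : (1 : ℝ) ≤ (n : ℝ) := by exact_mod_cast n.one_le
    have hgn : g n ^ 2 = (n : ℝ) ^ (2 * k) / (1 + (n : ℝ) ^ 2) ^ 5 := by
      simp only [hg, div_pow, Real.sq_sqrt (hEpos n).le, ← pow_mul, mul_comm k 2]
    rw [hgn, div_le_div_iff₀ (hEpos n) (by positivity)]
    calc (n : ℝ) ^ (2 * k) * (n : ℝ) ^ 2 ≤ (n : ℝ) ^ 8 * (n : ℝ) ^ 2 := by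
          have : (n : ℝ) ^ (2 * k) ≤ (n : ℝ) ^ 8 :=
            pow_le_pow_right₀ hn1 (by omega)
          exact mul_le_mul_of_nonneg_right this (by positivity)
      _ = ((n : ℝ) ^ 2) ^ 5 := by ring
      _ ≤ 1 * (1 + (n : ℝ) ^ 2) ^ 5 := by
          rw [one_mul]
          exact pow_le_pow_left₀ (by positivity) (by linarith) 5
  have key : ∀ n : ℕ+, a n * (n : ℝ) ^ k = |f n * g n| := by
    intro n
    have hs : Real.sqrt ((1 + (n : ℝ) ^ 2) ^ 5) ≠ 0 := by
      positivity
    have : f n * g n = a n * (n : ℝ) ^ k := by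
      simp only [hf, hg]
      field_simp
    rw [this, abs_of_nonneg (mul_nonneg (hpos n).le (by positivity))]
  exact (summable_abs_mul hfs hgs).congr (fun n => (key n).symm)


lemma abs_sin_sub_sin (a b : ℝ) : |Real.sin a - Real.sin b| ≤ |a - b| := by
  rw [Real.sin_sub_sin, abs_mul, abs_mul]
  have h1 : |Real.sin ((a - b) / 2)| ≤ |(a - b) / 2| := Real.abs_sin_le_abs
  have h2 : |Real.cos ((a + b) / 2)| ≤ 1 := Real.abs_cos_le_one _
  have h3 : |(a - b) / 2| = |a - b| / 2 := by rw [abs_div]; norm_num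
  have h4 : |(2:ℝ)| = 2 := by norm_num
  have h5 : |Real.sin ((a - b) / 2)| ≤ |a - b| / 2 := h3 ▸ h1
  nlinarith [abs_nonneg (Real.sin ((a - b) / 2)), abs_nonneg (Real.cos ((a + b) / 2)),
    abs_nonneg (a - b), mul_le_mul h5 h2 (abs_nonneg _) (by positivity : (0:ℝ) ≤ |a - b| / 2)]

lemma abs_cos_sub_cos (a b : ℝ) : |Real.cos a - Real.cos b| ≤ |a - b| := by
  rw [Real.cos_sub_cos, abs_mul, abs_mul, abs_neg]
  have h1 : |Real.sin ((a - b) / 2)| ≤ |(a - b) / 2| := Real.abs_sin_le_abs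
  have h2 : |Real.sin ((a + b) / 2)| ≤ 1 := Real.abs_sin_le_one _
  have h3 : |(a - b) / 2| = |a - b| / 2 := by rw [abs_div]; norm_num
  have h4 : |(2:ℝ)| = 2 := by norm_num
  have h5 : |Real.sin ((a - b) / 2)| ≤ |a - b| / 2 := h3 ▸ h1
  nlinarith [abs_nonneg (Real.sin ((a - b) / 2)), abs_nonneg (Real.sin ((a + b) / 2)),
    abs_nonneg (a - b), mul_le_mul h2 h5 (abs_nonneg _) (by norm_num : (0:ℝ) ≤ 1)]

lemma abs_add4 (a b c d : ℝ) : |a + b + c + d| ≤ |a| + |b| + |c| + |d| :=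
  (abs_add_le (a + b + c) d).trans (add_le_add_left (abs_add_three a b c) _)

lemma F_lip {a : ℕ+ → ℝ} (hpos : ∀ n, 0 < a n) (hO5 : MemO5 a)
    {F : Hsp → Hsp} (hF : IsDriftF a F) (z1 z2 : Hsp) :
    ‖F z1 - F z2‖ ≤
      (Real.sqrt (∑' n, a n * (n : ℝ) ^ 4) * (‖Hu z1‖ + ‖Hv z1‖) +
        4 * Real.sqrt (∑' n, a n * (n : ℝ) ^ 2)) * ‖z1 - z2‖ := by
  have S2s : Summable fun n : ℕ+ => a n * (n : ℝ) ^ 2 := summable_a_mul hpos hO5 2 (by norm_num)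
  have S4s : Summable fun n : ℕ+ => a n * (n : ℝ) ^ 4 := summable_a_mul hpos hO5 4 (by norm_num)
  set S2 := ∑' n : ℕ+, a n * (n : ℝ) ^ 2 with hS2
  set S4 := ∑' n : ℕ+, a n * (n : ℝ) ^ 4 with hS4
  set x1 := Hx z1; set x2 := Hx z2
  set u1 := Hu z1; set u2 := Hu z2; set v1 := Hv z1; set v2 := Hv z2
  set du : l2 := u1 - u2 with hdu
  set dv : l2 := v1 - v2 with hdv
  set Z := ‖z1 - z2‖ with hZ
  set Δ := |x1 - x2| with hΔ
  have hsqa : ∀ n : ℕ+, Real.sqrt (a n) ^ 2 = a n := fun n => Real.sq_sqrt (hpos n).le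
  set g2 : ℕ+ → ℝ := fun n => Real.sqrt (a n) * (n : ℝ) with hg2
  set g4 : ℕ+ → ℝ := fun n => Real.sqrt (a n) * (n : ℝ) ^ 2 with hg4
  have hg2sq : Summable fun n => g2 n ^ 2 := by
    refine S2s.congr fun n => ?_
    simp only [hg2, mul_pow, hsqa]
  have hg4sq : Summable fun n => g4 n ^ 2 := by
    refine S4s.congr fun n => ?_
    simp only [hg4, mul_pow, hsqa, ← pow_mul]
  have hg2t : (∑' n, g2 n ^ 2) = S2 := by
    refine tsum_congr fun n => ?_
    simp only [hg2, mul_pow, hsqa]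
  have hg4t : (∑' n, g4 n ^ 2) = S4 := by
    refine tsum_congr fun n => ?_
    simp only [hg4, mul_pow, hsqa, ← pow_mul]
  have u1sq := l2_summable_sq u1
  have v1sq := l2_summable_sq v1
  have dusq := l2_summable_sq du
  have dvsq := l2_summable_sq dv
  have hsru : Real.sqrt (∑' n, (u1 n) ^ 2) = ‖u1‖ := by
    rw [← l2_norm_sq, Real.sqrt_sq (norm_nonneg _)]
  have hsrv : Real.sqrt (∑' n, (v1 n) ^ 2) = ‖v1‖ := by
    rw [← l2_norm_sq, Real.sqrt_sq (norm_nonneg _)]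
  have hsrdu : Real.sqrt (∑' n, (du n) ^ 2) = ‖du‖ := by
    rw [← l2_norm_sq, Real.sqrt_sq (norm_nonneg _)]
  have hsrdv : Real.sqrt (∑' n, (dv n) ^ 2) = ‖dv‖ := by
    rw [← l2_norm_sq, Real.sqrt_sq (norm_nonneg _)]
  -- the x-component summands
  set φ : Hsp → ℕ+ → ℝ := fun z n => Real.sqrt (a n) * (n : ℝ) *
      (Real.sin ((n : ℝ) * Hx z) * Hu z n + Real.cos ((n : ℝ) * Hx z) * Hv z n) with hφ
  have hφabs : ∀ z : Hsp, ∀ n : ℕ+,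
      |φ z n| ≤ |g2 n * Hu z n| + |g2 n * Hv z n| := by
    intro z n
    have h1 : |Real.sin ((n : ℝ) * Hx z) * Hu z n| ≤ |Hu z n| := by
      rw [abs_mul]
      exact mul_le_of_le_one_left (abs_nonneg _) (Real.abs_sin_le_one _)
    have h2 : |Real.cos ((n : ℝ) * Hx z) * Hv z n| ≤ |Hv z n| := by
      rw [abs_mul]
      exact mul_le_of_le_one_left (abs_nonneg _) (Real.abs_cos_le_one _)
    have e : φ z n = g2 n * (Real.sin ((n : ℝ) * Hx z) * Hu z n +
        Real.cos ((n : ℝ) * Hx z) * Hv z n) := by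
      simp only [hφ, hg2]
    calc |φ z n| = |g2 n| * |Real.sin ((n : ℝ) * Hx z) * Hu z n +
          Real.cos ((n : ℝ) * Hx z) * Hv z n| := by
            rw [e, abs_mul]
      _ ≤ |g2 n| * (|Hu z n| + |Hv z n|) := by
          refine mul_le_mul_of_nonneg_left ?_ (abs_nonneg _)
          exact (abs_add_le _ _).trans (add_le_add h1 h2)
      _ = |g2 n * Hu z n| + |g2 n * Hv z n| := by
          rw [abs_mul (g2 n) ((Hu z : ℕ+ → ℝ) n), abs_mul (g2 n) ((Hv z : ℕ+ → ℝ) n), mul_add]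
  have hφsummable : ∀ z : Hsp, Summable fun n => |φ z n| := by
    intro z
    exact Summable.of_nonneg_of_le (fun n => abs_nonneg _) (hφabs z)
      ((summable_abs_mul hg2sq (l2_summable_sq (Hu z))).add
        (summable_abs_mul hg2sq (l2_summable_sq (Hv z))))
  have hφs : ∀ z : Hsp, Summable (φ z) := fun z => (hφsummable z).of_abs
  -- pointwise bound on the difference of x-summands
  have key : ∀ n : ℕ+, |φ z1 n - φ z2 n| ≤
      Δ * |g4 n * u1 n| + Δ * |g4 n * v1 n| + |g2 n * du n| + |g2 n * dv n| := by
    intro n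
    have hdun : du n = u1 n - u2 n := l2_apply_sub u1 u2 n
    have hdvn : dv n = v1 n - v2 n := l2_apply_sub v1 v2 n
    have hrw : φ z1 n - φ z2 n = g2 n *
        ((Real.sin ((n : ℝ) * x1) - Real.sin ((n : ℝ) * x2)) * u1 n
          + Real.sin ((n : ℝ) * x2) * du n
          + (Real.cos ((n : ℝ) * x1) - Real.cos ((n : ℝ) * x2)) * v1 n
          + Real.cos ((n : ℝ) * x2) * dv n) := by
      rw [hdun, hdvn]; simp only [hφ, hg2]; ring
    have hsin : |Real.sin ((n : ℝ) * x1) - Real.sin ((n : ℝ) * x2)| ≤ (n : ℝ) * Δ := by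
      refine (abs_sin_sub_sin _ _).trans ?_
      rw [← mul_sub, abs_mul, abs_of_nonneg (by positivity : (0:ℝ) ≤ (n : ℝ))]
    have hcos : |Real.cos ((n : ℝ) * x1) - Real.cos ((n : ℝ) * x2)| ≤ (n : ℝ) * Δ := by
      refine (abs_cos_sub_cos _ _).trans ?_
      rw [← mul_sub, abs_mul, abs_of_nonneg (by positivity : (0:ℝ) ≤ (n : ℝ))]
    have hg2nn : (0:ℝ) ≤ g2 n := by rw [hg2]; positivity
    calc |φ z1 n - φ z2 n| = g2 n * |(Real.sin ((n : ℝ) * x1) - Real.sin ((n : ℝ) * x2)) * u1 n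
          + Real.sin ((n : ℝ) * x2) * du n
          + (Real.cos ((n : ℝ) * x1) - Real.cos ((n : ℝ) * x2)) * v1 n
          + Real.cos ((n : ℝ) * x2) * dv n| := by
            rw [hrw, abs_mul, abs_of_nonneg hg2nn]
      _ ≤ g2 n * (((n : ℝ) * Δ) * |u1 n| + 1 * |du n| + ((n : ℝ) * Δ) * |v1 n| + 1 * |dv n|) := by
            refine mul_le_mul_of_nonneg_left ?_ hg2nn
            refine (abs_add4 _ _ _ _).trans ?_
            simp only [abs_mul]
            refine add_le_add (add_le_add (add_le_add ?_ ?_) ?_) ?_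
            · exact mul_le_mul_of_nonneg_right hsin (abs_nonneg _)
            · exact mul_le_mul_of_nonneg_right (Real.abs_sin_le_one _) (abs_nonneg _)
            · exact mul_le_mul_of_nonneg_right hcos (abs_nonneg _)
            · exact mul_le_mul_of_nonneg_right (Real.abs_cos_le_one _) (abs_nonneg _)
      _ = Δ * (g4 n * |u1 n|) + g2 n * |du n| + Δ * (g4 n * |v1 n|) + g2 n * |dv n| := by
            simp only [hg2, hg4]; ring
      _ = Δ * |g4 n * u1 n| + Δ * |g4 n * v1 n| + |g2 n * du n| + |g2 n * dv n| := by
            have hg4nn : (0:ℝ) ≤ g4 n := by rw [hg4]; positivity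
            rw [abs_mul (g2 n), abs_mul (g2 n), abs_mul (g4 n), abs_mul (g4 n),
              abs_of_nonneg hg2nn, abs_of_nonneg hg4nn]
            ring
  -- x-component estimate
  have hu1CS : (∑' n, |g4 n * u1 n|) ≤ Real.sqrt S4 * ‖u1‖ := by
    have := tsum_abs_mul_le hg4sq u1sq
    rwa [hg4t, hsru] at this
  have hv1CS : (∑' n, |g4 n * v1 n|) ≤ Real.sqrt S4 * ‖v1‖ := by
    have := tsum_abs_mul_le hg4sq v1sq
    rwa [hg4t, hsrv] at this
  have hduCS : (∑' n, |g2 n * du n|) ≤ Real.sqrt S2 * ‖du‖ := by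
    have := tsum_abs_mul_le hg2sq dusq
    rwa [hg2t, hsrdu] at this
  have hdvCS : (∑' n, |g2 n * dv n|) ≤ Real.sqrt S2 * ‖dv‖ := by
    have := tsum_abs_mul_le hg2sq dvsq
    rwa [hg2t, hsrdv] at this
  have sA : Summable fun n => Δ * |g4 n * u1 n| := (summable_abs_mul hg4sq u1sq).mul_left Δ
  have sB : Summable fun n => Δ * |g4 n * v1 n| := (summable_abs_mul hg4sq v1sq).mul_left Δ
  have sC : Summable fun n => |g2 n * du n| := summable_abs_mul hg2sq dusq
  have sD : Summable fun n => |g2 n * dv n| := summable_abs_mul hg2sq dvsq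
  have hxbound : |Hx (F z1) - Hx (F z2)| ≤
      Δ * (Real.sqrt S4 * ‖u1‖) + Δ * (Real.sqrt S4 * ‖v1‖)
        + Real.sqrt S2 * ‖du‖ + Real.sqrt S2 * ‖dv‖ := by
    have hdiff : Hx (F z1) - Hx (F z2) = ∑' n, (φ z1 n - φ z2 n) := by
      rw [(hF z1).1, (hF z2).1, Summable.tsum_sub (hφs z1) (hφs z2)]
    have habs : |∑' n, (φ z1 n - φ z2 n)| ≤ ∑' n, |φ z1 n - φ z2 n| := by
      have hsum : Summable fun n => |φ z1 n - φ z2 n| := by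
        refine Summable.of_nonneg_of_le (fun n => abs_nonneg _)
          (fun n => abs_sub _ _) ((hφsummable z1).add (hφsummable z2))
      calc |∑' n, (φ z1 n - φ z2 n)| = ‖∑' n, (φ z1 n - φ z2 n)‖ := (Real.norm_eq_abs _).symm
        _ ≤ ∑' n, ‖φ z1 n - φ z2 n‖ :=
            norm_tsum_le_tsum_norm (hsum.congr fun n => (Real.norm_eq_abs _).symm)
        _ = ∑' n, |φ z1 n - φ z2 n| := tsum_congr fun n => Real.norm_eq_abs _
    have hsum : Summable fun n => |φ z1 n - φ z2 n| := by
      refine Summable.of_nonneg_of_le (fun n => abs_nonneg _)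
        (fun n => abs_sub _ _) ((hφsummable z1).add (hφsummable z2))
    have step : (∑' n, |φ z1 n - φ z2 n|) ≤
        ∑' n, (Δ * |g4 n * u1 n| + Δ * |g4 n * v1 n| + |g2 n * du n| + |g2 n * dv n|) :=
      Summable.tsum_le_tsum key hsum (((sA.add sB).add sC).add sD)
    have split : (∑' n, (Δ * |g4 n * u1 n| + Δ * |g4 n * v1 n|
          + |g2 n * du n| + |g2 n * dv n|)) =
        Δ * (∑' n, |g4 n * u1 n|) + Δ * (∑' n, |g4 n * v1 n|)
          + (∑' n, |g2 n * du n|) + (∑' n, |g2 n * dv n|) := by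
      rw [Summable.tsum_add ((sA.add sB).add sC) sD, Summable.tsum_add (sA.add sB) sC, Summable.tsum_add sA sB,
        tsum_mul_left, tsum_mul_left]
    have hΔnn : (0:ℝ) ≤ Δ := abs_nonneg _
    rw [hdiff]
    refine habs.trans (step.trans ?_)
    rw [split]
    have e1 : Δ * (∑' n, |g4 n * u1 n|) ≤ Δ * (Real.sqrt S4 * ‖u1‖) :=
      mul_le_mul_of_nonneg_left hu1CS hΔnn
    have e2 : Δ * (∑' n, |g4 n * v1 n|) ≤ Δ * (Real.sqrt S4 * ‖v1‖) :=
      mul_le_mul_of_nonneg_left hv1CS hΔnn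
    linarith
  -- u-component estimate
  have hubound : ‖Hu (F z1) - Hu (F z2)‖ ≤ Real.sqrt S2 * Δ := by
    have hb : ∀ n : ℕ+, ((Hu (F z1) - Hu (F z2)) n) ^ 2 ≤ (a n * (n : ℝ) ^ 2) * Δ ^ 2 := by
      intro n
      rw [l2_apply_sub, (hF z1).2.1 n, (hF z2).2.1 n]
      have hcos : |Real.cos ((n : ℝ) * x1) - Real.cos ((n : ℝ) * x2)| ≤ (n : ℝ) * Δ := by
        refine (abs_cos_sub_cos _ _).trans ?_
        rw [← mul_sub, abs_mul, abs_of_nonneg (by positivity : (0:ℝ) ≤ (n : ℝ))]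
      have h1 : (Real.cos ((n : ℝ) * x1) - Real.cos ((n : ℝ) * x2)) ^ 2 ≤ ((n : ℝ) * Δ) ^ 2 := by
        rw [← sq_abs]
        exact pow_le_pow_left₀ (abs_nonneg _) hcos 2
      have : Real.sqrt (a n) * Real.cos ((n : ℝ) * x1) - Real.sqrt (a n) * Real.cos ((n : ℝ) * x2)
          = Real.sqrt (a n) * (Real.cos ((n : ℝ) * x1) - Real.cos ((n : ℝ) * x2)) := by ring
      rw [this, mul_pow, hsqa]
      calc a n * (Real.cos ((n : ℝ) * x1) - Real.cos ((n : ℝ) * x2)) ^ 2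
          ≤ a n * ((n : ℝ) * Δ) ^ 2 := mul_le_mul_of_nonneg_left h1 (hpos n).le
        _ = (a n * (n : ℝ) ^ 2) * Δ ^ 2 := by ring
    have hcs : Summable fun n : ℕ+ => (a n * (n : ℝ) ^ 2) * Δ ^ 2 := S2s.mul_right _
    have hnn : (0:ℝ) ≤ ∑' n : ℕ+, a n * (n : ℝ) ^ 2 :=
      tsum_nonneg fun n => mul_nonneg (hpos n).le (by positivity)
    have hΔnn : (0:ℝ) ≤ Δ := hΔ ▸ abs_nonneg _
    have := l2_norm_le_of_sq_le hcs hb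
    rw [tsum_mul_right, Real.sqrt_mul hnn, Real.sqrt_sq hΔnn] at this
    exact this
  -- v-component estimate
  have hvbound : ‖Hv (F z1) - Hv (F z2)‖ ≤ Real.sqrt S2 * Δ := by
    have hb : ∀ n : ℕ+, ((Hv (F z1) - Hv (F z2)) n) ^ 2 ≤ (a n * (n : ℝ) ^ 2) * Δ ^ 2 := by
      intro n
      rw [l2_apply_sub, (hF z1).2.2 n, (hF z2).2.2 n]
      have hsin : |Real.sin ((n : ℝ) * x1) - Real.sin ((n : ℝ) * x2)| ≤ (n : ℝ) * Δ := by
        refine (abs_sin_sub_sin _ _).trans ?_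
        rw [← mul_sub, abs_mul, abs_of_nonneg (by positivity : (0:ℝ) ≤ (n : ℝ))]
      have h1 : (Real.sin ((n : ℝ) * x1) - Real.sin ((n : ℝ) * x2)) ^ 2 ≤ ((n : ℝ) * Δ) ^ 2 := by
        rw [← sq_abs]
        exact pow_le_pow_left₀ (abs_nonneg _) hsin 2
      have : -(Real.sqrt (a n) * Real.sin ((n : ℝ) * x1)) -
          -(Real.sqrt (a n) * Real.sin ((n : ℝ) * x2))
          = -(Real.sqrt (a n) * (Real.sin ((n : ℝ) * x1) - Real.sin ((n : ℝ) * x2))) := by ring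
      rw [this, neg_pow, mul_pow, hsqa]
      calc (-1:ℝ) ^ 2 * (a n * (Real.sin ((n : ℝ) * x1) - Real.sin ((n : ℝ) * x2)) ^ 2)
          = a n * (Real.sin ((n : ℝ) * x1) - Real.sin ((n : ℝ) * x2)) ^ 2 := by ring
        _ ≤ a n * ((n : ℝ) * Δ) ^ 2 := mul_le_mul_of_nonneg_left h1 (hpos n).le
        _ = (a n * (n : ℝ) ^ 2) * Δ ^ 2 := by ring
    have hcs : Summable fun n : ℕ+ => (a n * (n : ℝ) ^ 2) * Δ ^ 2 := S2s.mul_right _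
    have hnn : (0:ℝ) ≤ ∑' n : ℕ+, a n * (n : ℝ) ^ 2 :=
      tsum_nonneg fun n => mul_nonneg (hpos n).le (by positivity)
    have hΔnn : (0:ℝ) ≤ Δ := hΔ ▸ abs_nonneg _
    have := l2_norm_le_of_sq_le hcs hb
    rw [tsum_mul_right, Real.sqrt_mul hnn, Real.sqrt_sq hΔnn] at this
    exact this
  -- combine
  have hΔZ : Δ ≤ Z := by
    rw [hΔ, hZ]
    have : x1 - x2 = Hx (z1 - z2) := (Hx_sub z1 z2).symm
    rw [this]
    exact abs_Hx_le _
  have hduZ : ‖du‖ ≤ Z := by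
    rw [hdu, hZ]
    have : u1 - u2 = Hu (z1 - z2) := (Hu_sub z1 z2).symm
    rw [this]
    exact norm_Hu_le _
  have hdvZ : ‖dv‖ ≤ Z := by
    rw [hdv, hZ]
    have : v1 - v2 = Hv (z1 - z2) := (Hv_sub z1 z2).symm
    rw [this]
    exact norm_Hv_le _
  have hcomb := H_norm_le (F z1 - F z2)
  rw [Hx_sub, Hu_sub, Hv_sub] at hcomb
  have hS2nn : (0:ℝ) ≤ Real.sqrt S2 := Real.sqrt_nonneg _
  have hS4nn : (0:ℝ) ≤ Real.sqrt S4 := Real.sqrt_nonneg _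
  have hZnn : (0:ℝ) ≤ Z := norm_nonneg _
  have hΔnn : (0:ℝ) ≤ Δ := abs_nonneg _
  calc ‖F z1 - F z2‖ ≤ |Hx (F z1) - Hx (F z2)| + ‖Hu (F z1) - Hu (F z2)‖
        + ‖Hv (F z1) - Hv (F z2)‖ := hcomb
    _ ≤ (Δ * (Real.sqrt S4 * ‖u1‖) + Δ * (Real.sqrt S4 * ‖v1‖)
          + Real.sqrt S2 * ‖du‖ + Real.sqrt S2 * ‖dv‖)
        + Real.sqrt S2 * Δ + Real.sqrt S2 * Δ :=
      add_le_add (add_le_add hxbound hubound) hvbound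
    _ ≤ (Z * (Real.sqrt S4 * ‖u1‖) + Z * (Real.sqrt S4 * ‖v1‖)
          + Real.sqrt S2 * Z + Real.sqrt S2 * Z)
        + Real.sqrt S2 * Z + Real.sqrt S2 * Z := by
      gcongr <;> positivity
    _ = (Real.sqrt S4 * (‖u1‖ + ‖v1‖) + 4 * Real.sqrt S2) * Z := by ring


lemma l2_norm_le_of_coord_sq_le {p q : l2} (h : ∀ n, (p n) ^ 2 ≤ (q n) ^ 2) : ‖p‖ ≤ ‖q‖ := by
  have := l2_norm_le_of_sq_le (l2_summable_sq q) h
  rwa [← l2_norm_sq, Real.sqrt_sq (norm_nonneg q)] at this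

lemma H_norm_le_of_components {z z' : Hsp} (hx : |Hx z| ≤ |Hx z'|)
    (hu : ‖Hu z‖ ≤ ‖Hu z'‖) (hv : ‖Hv z‖ ≤ ‖Hv z'‖) : ‖z‖ ≤ ‖z'‖ := by
  have h1 := H_norm_sq z
  have h2 := H_norm_sq z'
  nlinarith [norm_nonneg z, norm_nonneg z', norm_nonneg (Hu z), norm_nonneg (Hv z),
    abs_nonneg (Hx z), sq_abs (Hx z), sq_abs (Hx z')]

lemma PN_lip {P : ℕ+ → Hsp → Hsp} (hP : IsGalerkin P) (N : ℕ+) (w1 w2 : Hsp) :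
    ‖P N w1 - P N w2‖ ≤ ‖w1 - w2‖ := by
  refine H_norm_le_of_components ?_ ?_ ?_
  · rw [Hx_sub, Hx_sub, (hP N w1).1, (hP N w2).1]
  · rw [Hu_sub, Hu_sub]
    refine l2_norm_le_of_coord_sq_le fun n => ?_
    rw [l2_apply_sub, l2_apply_sub, (hP N w1).2.1 n, (hP N w2).2.1 n]
    by_cases h : n ≤ N
    · rw [if_pos h, if_pos h]
    · rw [if_neg h, if_neg h]; simpa using sq_nonneg _
  · rw [Hv_sub, Hv_sub]
    refine l2_norm_le_of_coord_sq_le fun n => ?_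
    rw [l2_apply_sub, l2_apply_sub, (hP N w1).2.2 n, (hP N w2).2.2 n]
    by_cases h : n ≤ N
    · rw [if_pos h, if_pos h]
    · rw [if_neg h, if_neg h]; simpa using sq_nonneg _

lemma PN_cont {P : ℕ+ → Hsp → Hsp} (hP : IsGalerkin P) (N : ℕ+) : Continuous (P N) := by
  have : LipschitzWith 1 (P N) := by
    refine LipschitzWith.of_dist_le_mul fun w1 w2 => ?_
    rw [dist_eq_norm, dist_eq_norm, NNReal.coe_one, one_mul]
    exact PN_lip hP N w1 w2
  exact this.continuous

lemma HuF_coord_sq {a : ℕ+ → ℝ} (hpos : ∀ n, 0 < a n) {F : Hsp → Hsp}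
    (hF : IsDriftF a F) (z : Hsp) (n : ℕ+) : (Hu (F z) n) ^ 2 ≤ a n := by
  rw [(hF z).2.1 n, mul_pow, Real.sq_sqrt (hpos n).le]
  calc a n * Real.cos ((n : ℝ) * Hx z) ^ 2 ≤ a n * 1 := by
        refine mul_le_mul_of_nonneg_left ?_ (hpos n).le
        rw [← sq_abs]
        nlinarith [Real.abs_cos_le_one ((n : ℝ) * Hx z), abs_nonneg (Real.cos ((n : ℝ) * Hx z))]
    _ = a n := mul_one _

lemma HvF_coord_sq {a : ℕ+ → ℝ} (hpos : ∀ n, 0 < a n) {F : Hsp → Hsp}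
    (hF : IsDriftF a F) (z : Hsp) (n : ℕ+) : (Hv (F z) n) ^ 2 ≤ a n := by
  rw [(hF z).2.2 n, neg_pow, mul_pow, Real.sq_sqrt (hpos n).le]
  have h : Real.sin ((n : ℝ) * Hx z) ^ 2 ≤ 1 := by
    rw [← sq_abs]
    nlinarith [Real.abs_sin_le_one ((n : ℝ) * Hx z), abs_nonneg (Real.sin ((n : ℝ) * Hx z))]
  calc (-1:ℝ) ^ 2 * (a n * Real.sin ((n : ℝ) * Hx z) ^ 2)
      = a n * Real.sin ((n : ℝ) * Hx z) ^ 2 := by ring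
    _ ≤ a n * 1 := mul_le_mul_of_nonneg_left h (hpos n).le
    _ = a n := mul_one _

lemma norm_HuF_le {a : ℕ+ → ℝ} (hpos : ∀ n, 0 < a n) (hO5 : MemO5 a) {F : Hsp → Hsp}
    (hF : IsDriftF a F) (z : Hsp) : ‖Hu (F z)‖ ≤ Real.sqrt (∑' n, a n) := by
  exact l2_norm_le_of_sq_le (by simpa using summable_a_mul hpos hO5 0 (by norm_num))
    (HuF_coord_sq hpos hF z)

lemma norm_HvF_le {a : ℕ+ → ℝ} (hpos : ∀ n, 0 < a n) (hO5 : MemO5 a) {F : Hsp → Hsp}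
    (hF : IsDriftF a F) (z : Hsp) : ‖Hv (F z)‖ ≤ Real.sqrt (∑' n, a n) := by
  exact l2_norm_le_of_sq_le (by simpa using summable_a_mul hpos hO5 0 (by norm_num))
    (HvF_coord_sq hpos hF z)

lemma norm_HuPN_le {P : ℕ+ → Hsp → Hsp} (hP : IsGalerkin P) (N : ℕ+) (w : Hsp) :
    ‖Hu (P N w)‖ ≤ ‖Hu w‖ := by
  refine l2_norm_le_of_coord_sq_le fun n => ?_
  rw [(hP N w).2.1 n]
  by_cases h : n ≤ N
  · rw [if_pos h]
  · rw [if_neg h]; simpa using sq_nonneg _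

lemma norm_HvPN_le {P : ℕ+ → Hsp → Hsp} (hP : IsGalerkin P) (N : ℕ+) (w : Hsp) :
    ‖Hv (P N w)‖ ≤ ‖Hv w‖ := by
  refine l2_norm_le_of_coord_sq_le fun n => ?_
  rw [(hP N w).2.2 n]
  by_cases h : n ≤ N
  · rw [if_pos h]
  · rw [if_neg h]; simpa using sq_nonneg _

lemma summable_tail {a : ℕ+ → ℝ} (hpos : ∀ n, 0 < a n) (hO5 : MemO5 a) (N : ℕ+) :
    Summable fun n : ℕ+ => if N < n then a n else 0 := by
  refine Summable.of_nonneg_of_le (fun n => ?_) (fun n => ?_)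
    (by simpa using summable_a_mul hpos hO5 0 (by norm_num))
  · by_cases h : N < n
    · rw [if_pos h]; exact (hpos n).le
    · rw [if_neg h]
  · by_cases h : N < n
    · rw [if_pos h]
    · rw [if_neg h]
      exact (hpos n).le

lemma PN_tail_sq {a : ℕ+ → ℝ} (hpos : ∀ n, 0 < a n) (hO5 : MemO5 a) {F : Hsp → Hsp}
    (hF : IsDriftF a F) {P : ℕ+ → Hsp → Hsp} (hP : IsGalerkin P) (N : ℕ+) (z : Hsp) :
    ‖P N (F z) - F z‖ ^ 2 ≤ 2 * ∑' n : ℕ+, if N < n then a n else 0 := by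
  set tl := ∑' n : ℕ+, if N < n then a n else 0 with htl
  have htlnn : (0:ℝ) ≤ tl := tsum_nonneg fun n => by
    by_cases h : N < n
    · rw [if_pos h]; exact (hpos n).le
    · rw [if_neg h]
  have hcoord : ∀ (q : l2) (hq : ∀ n, (q n) ^ 2 ≤ a n) (n : ℕ+),
      ((if n ≤ N then q n else 0) - q n) ^ 2 ≤ (if N < n then a n else 0) := by
    intro q hq n
    by_cases h : n ≤ N
    · rw [if_pos h, if_neg (not_lt.2 h)]; simp
    · rw [if_neg h, if_pos (not_le.1 h)]
      simpa using hq n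
  have hu : ‖Hu (P N (F z) - F z)‖ ^ 2 ≤ tl := by
    have h1 : ‖Hu (P N (F z) - F z)‖ ≤ Real.sqrt tl := by
      refine l2_norm_le_of_sq_le (summable_tail hpos hO5 N) fun n => ?_
      rw [Hu_sub, l2_apply_sub, (hP N (F z)).2.1 n]
      exact hcoord (Hu (F z)) (HuF_coord_sq hpos hF z) n
    calc ‖Hu (P N (F z) - F z)‖ ^ 2 ≤ Real.sqrt tl ^ 2 :=
          pow_le_pow_left₀ (norm_nonneg _) h1 2
      _ = tl := Real.sq_sqrt htlnn
  have hv : ‖Hv (P N (F z) - F z)‖ ^ 2 ≤ tl := by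
    have h1 : ‖Hv (P N (F z) - F z)‖ ≤ Real.sqrt tl := by
      refine l2_norm_le_of_sq_le (summable_tail hpos hO5 N) fun n => ?_
      rw [Hv_sub, l2_apply_sub, (hP N (F z)).2.2 n]
      exact hcoord (Hv (F z)) (HvF_coord_sq hpos hF z) n
    calc ‖Hv (P N (F z) - F z)‖ ^ 2 ≤ Real.sqrt tl ^ 2 :=
          pow_le_pow_left₀ (norm_nonneg _) h1 2
      _ = tl := Real.sq_sqrt htlnn
  have hx : Hx (P N (F z) - F z) = 0 := by
    rw [Hx_sub, (hP N (F z)).1, sub_self]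
  rw [H_norm_sq, hx]
  nlinarith [hu, hv]

lemma F_cont {a : ℕ+ → ℝ} (hpos : ∀ n, 0 < a n) (hO5 : MemO5 a) {F : Hsp → Hsp}
    (hF : IsDriftF a F) : Continuous F := by
  set S2 := ∑' n : ℕ+, a n * (n : ℝ) ^ 2 with hS2
  set S4 := ∑' n : ℕ+, a n * (n : ℝ) ^ 4 with hS4
  rw [continuous_iff_continuousAt]
  intro z0
  rw [Metric.continuousAt_iff]
  intro ε hε
  set M := Real.sqrt S4 * (2 * ‖z0‖ + 2) + 4 * Real.sqrt S2 + 1 with hM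
  have hMpos : 0 < M := by
    have := Real.sqrt_nonneg S4
    have := Real.sqrt_nonneg S2
    have := norm_nonneg z0
    nlinarith
  refine ⟨min 1 (ε / M), lt_min one_pos (div_pos hε hMpos), fun {z} hz => ?_⟩
  rw [dist_eq_norm] at hz ⊢
  have hz1 : ‖z - z0‖ < 1 := lt_of_lt_of_le hz (min_le_left _ _)
  have hz2 : ‖z - z0‖ < ε / M := lt_of_lt_of_le hz (min_le_right _ _)
  have hzb : ‖z‖ ≤ ‖z0‖ + 1 := by
    calc ‖z‖ = ‖z - z0 + z0‖ := by rw [sub_add_cancel]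
      _ ≤ ‖z - z0‖ + ‖z0‖ := norm_add_le _ _
      _ ≤ ‖z0‖ + 1 := by linarith
  have hcomp : Real.sqrt S4 * (‖Hu z‖ + ‖Hv z‖) + 4 * Real.sqrt S2 ≤ M := by
    have h1 : ‖Hu z‖ ≤ ‖z‖ := norm_Hu_le z
    have h2 : ‖Hv z‖ ≤ ‖z‖ := norm_Hv_le z
    have h3 := Real.sqrt_nonneg S4
    nlinarith
  have hlip := F_lip hpos hO5 hF z z0
  calc ‖F z - F z0‖ ≤ (Real.sqrt S4 * (‖Hu z‖ + ‖Hv z‖) + 4 * Real.sqrt S2) * ‖z - z0‖ := hlip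
    _ ≤ M * ‖z - z0‖ := mul_le_mul_of_nonneg_right hcomp (norm_nonneg _)
    _ < M * (ε / M) := by
        refine mul_lt_mul_of_pos_left hz2 hMpos
    _ = ε := by field_simp


lemma PNy_sq_le {P : ℕ+ → Hsp → Hsp} (hP : IsGalerkin P) (y : Hsp) (N : ℕ+) :
    ‖P N y - y‖ ^ 2 ≤ (∑' n : ℕ+, if N < n then (Hu y n) ^ 2 else 0) +
      (∑' n : ℕ+, if N < n then (Hv y n) ^ 2 else 0) := by
  have hgen : ∀ (q : l2) (qq : l2) (hco : ∀ n : ℕ+, (qq n) = if n ≤ N then q n else 0),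
      ‖qq - q‖ ^ 2 ≤ ∑' n : ℕ+, if N < n then (q n) ^ 2 else 0 := by
    intro q qq hco
    have hsumm : Summable (fun n : ℕ+ => if N < n then (q n) ^ 2 else 0) := by
      refine Summable.of_nonneg_of_le (fun n => ?_) (fun n => ?_) (l2_summable_sq q)
      · by_cases h : N < n
        · rw [if_pos h]; exact sq_nonneg _
        · rw [if_neg h]
      · by_cases h : N < n
        · rw [if_pos h]
        · rw [if_neg h]; exact sq_nonneg _
    have h1 : ‖qq - q‖ ≤ Real.sqrt (∑' n : ℕ+, if N < n then (q n) ^ 2 else 0) := by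
      refine l2_norm_le_of_sq_le hsumm fun n => ?_
      rw [l2_apply_sub, hco n]
      by_cases h : n ≤ N
      · rw [if_pos h, if_neg (not_lt.2 h)]; simp
      · rw [if_neg h, if_pos (not_le.1 h)]
        simpa using le_of_eq (by ring)
    have hnn : (0:ℝ) ≤ ∑' n : ℕ+, if N < n then (q n) ^ 2 else 0 :=
      tsum_nonneg fun n => by
        by_cases h : N < n
        · rw [if_pos h]; exact sq_nonneg _
        · rw [if_neg h]
    calc ‖qq - q‖ ^ 2 ≤ Real.sqrt (∑' n : ℕ+, if N < n then (q n) ^ 2 else 0) ^ 2 :=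
          pow_le_pow_left₀ (norm_nonneg _) h1 2
      _ = _ := Real.sq_sqrt hnn
  have hx : Hx (P N y - y) = 0 := by rw [Hx_sub, (hP N y).1, sub_self]
  have hu : ‖Hu (P N y - y)‖ ^ 2 ≤ ∑' n : ℕ+, if N < n then (Hu y n) ^ 2 else 0 := by
    rw [Hu_sub]
    exact hgen (Hu y) (Hu (P N y)) (hP N y).2.1
  have hv : ‖Hv (P N y - y)‖ ^ 2 ≤ ∑' n : ℕ+, if N < n then (Hv y n) ^ 2 else 0 := by
    rw [Hv_sub]
    exact hgen (Hv y) (Hv (P N y)) (hP N y).2.2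
  rw [H_norm_sq, hx]
  nlinarith [hu, hv]


end Stmt11Aux

set_option maxHeartbeats 1000000 in
set_option synthInstance.maxHeartbeats 400000 in
/-- If `Y` solves `Y(t) = y + ∫₀ᵗ F(Y(s))ds + (w(t),0,0)` and, for
each `N`, `Y^{(N)}` solves the Galerkin equation
`Y^{(N)}(t) = Π_N y + ∫₀ᵗ Π_N F(Y^{(N)}(s))ds + (w(t),0,0)`, then for every `T > 0`
there are constants `C, C(y,T) > 0` with
`sup_{0≤t≤T} ‖Y^{(N)}(t) − Y(t)‖² ≤ (‖Π_N y − y‖² + C T Σ_{n>N} aₙ) e^{C(y,T)}`;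
in particular `sup_{0≤t≤T} ‖Y^{(N)}(t) − Y(t)‖ → 0` as `N → ∞`. -/
theorem stmt11 (a : ℕ+ → ℝ) (hpos : ∀ n, 0 < a n) (hO5 : MemO5 a)
    (F : Hsp → Hsp) (hF : IsDriftF a F)
    (P : ℕ+ → Hsp → Hsp) (hP : IsGalerkin P)
    (w : ℝ → ℝ) (hw : ContinuousOn w (Set.Ici 0)) (y : Hsp)
    (Y : ℝ → Hsp) (hYc : ContinuousOn Y (Set.Ici 0))
    (hY : ∀ t ≥ (0 : ℝ),
      Y t = y + (∫ s in Set.Ioc (0 : ℝ) t, F (Y s)) + mkH (w t) 0 0)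
    (YN : ℕ+ → ℝ → Hsp) (hYNc : ∀ N : ℕ+, ContinuousOn (YN N) (Set.Ici 0))
    (hYN : ∀ N : ℕ+, ∀ t ≥ (0 : ℝ),
      YN N t = P N y + (∫ s in Set.Ioc (0 : ℝ) t, P N (F (YN N s))) + mkH (w t) 0 0) :
    ∀ T > (0 : ℝ),
      (∃ C > (0 : ℝ), ∃ C' > (0 : ℝ), ∀ N : ℕ+, ∀ t ∈ Set.Icc (0 : ℝ) T,
        ‖YN N t - Y t‖ ^ 2 ≤
          (‖P N y - y‖ ^ 2 + C * T * ∑' n : ℕ+, if N < n then a n else 0) *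
            Real.exp C') ∧
      Filter.Tendsto (fun N : ℕ+ => ⨆ t : Set.Icc (0 : ℝ) T, ‖YN N t - Y t‖)
        Filter.atTop (nhds 0) := by
  classical
  intro T hT
  open Stmt11Aux in
  have hSs : Summable a := by simpa using Stmt11Aux.summable_a_mul hpos hO5 0 (by norm_num)
  have hSnn : (0:ℝ) ≤ ∑' n : ℕ+, a n := tsum_nonneg fun n => (hpos n).le
  set R : ℝ := ‖y‖ + Real.sqrt (∑' n : ℕ+, a n) * T with hR
  have hRnn : 0 ≤ R := by
    rw [hR]; positivity
  set K : ℝ := Real.sqrt (∑' n : ℕ+, a n * (n : ℝ) ^ 4) * (2 * R) +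
      4 * Real.sqrt (∑' n : ℕ+, a n * (n : ℝ) ^ 2) + 1 with hK
  have hK1 : 1 ≤ K := by
    rw [hK]
    have h1 : (0:ℝ) ≤ Real.sqrt (∑' n : ℕ+, a n * (n : ℝ) ^ 4) * (2 * R) := by positivity
    have h2 : (0:ℝ) ≤ 4 * Real.sqrt (∑' n : ℕ+, a n * (n : ℝ) ^ 2) := by positivity
    linarith
  set tl : ℕ+ → ℝ := fun N => ∑' n : ℕ+, if N < n then a n else 0 with htl
  have htlnn : ∀ N, 0 ≤ tl N := by
    intro N
    refine tsum_nonneg fun n => ?_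
    by_cases h : N < n
    · rw [if_pos h]; exact (hpos n).le
    · rw [if_neg h]
  -- continuity of integrands
  have hFc : Continuous F := Stmt11Aux.F_cont hpos hO5 hF
  have hGNc : ∀ N : ℕ+, ContinuousOn (fun s => P N (F (YN N s))) (Set.Ici 0) := fun N =>
    ((Stmt11Aux.PN_cont hP N).comp hFc).comp_continuousOn (hYNc N)
  have hgc : ContinuousOn (fun s => F (Y s)) (Set.Ici 0) := hFc.comp_continuousOn hYc
  -- integrability
  have hInt : ∀ (f : ℝ → Hsp), ContinuousOn f (Set.Ici 0) → ∀ t, 0 ≤ t →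
      IntegrableOn f (Set.Ioc 0 t) := by
    intro f hf t ht
    exact ((hf.mono (Set.Icc_subset_Ici_self)).integrableOn_Icc).mono_set
      Set.Ioc_subset_Icc_self
  -- uniform bound on the (u,v)-components of the Galerkin solutions
  have hcompYN : ∀ N : ℕ+, ∀ t ∈ Set.Icc (0:ℝ) T,
      ‖Hu (YN N t)‖ ≤ R ∧ ‖Hv (YN N t)‖ ≤ R := by
    intro N t ht
    have ht0 : (0:ℝ) ≤ t := ht.1
    have heq := hYN N t ht0
    have hIok : IntegrableOn (fun s => P N (F (YN N s))) (Set.Ioc 0 t) :=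
      hInt _ (hGNc N) t ht0
    have hμ : (MeasureTheory.volume (Set.Ioc (0:ℝ) t)).toReal = t := by
      rw [Real.volume_Ioc]
      simp [ENNReal.toReal_ofReal ht0]
    have hμfin : MeasureTheory.volume (Set.Ioc (0:ℝ) t) < ⊤ := by
      rw [Real.volume_Ioc]; exact ENNReal.ofReal_lt_top
    constructor
    · have h1 : Hu (YN N t) = Hu (P N y) +
          Hu (∫ s in Set.Ioc (0:ℝ) t, P N (F (YN N s))) := by
        rw [heq, Stmt11Aux.Hu_add, Stmt11Aux.Hu_add, Stmt11Aux.Hu_mkH, add_zero]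
      have h2 : Hu (∫ s in Set.Ioc (0:ℝ) t, P N (F (YN N s))) =
          ∫ s in Set.Ioc (0:ℝ) t, Stmt11Aux.HuL (P N (F (YN N s))) :=
        (Stmt11Aux.HuL.integral_comp_comm hIok).symm
      have h3 : ‖∫ s in Set.Ioc (0:ℝ) t, Stmt11Aux.HuL (P N (F (YN N s)))‖ ≤
          Real.sqrt (∑' n : ℕ+, a n) * t := by
        have := MeasureTheory.norm_setIntegral_le_of_norm_le_const
          (μ := MeasureTheory.volume) (s := Set.Ioc (0:ℝ) t)
          (f := fun s => Stmt11Aux.HuL (P N (F (YN N s))))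
          (C := Real.sqrt (∑' n : ℕ+, a n)) hμfin ?_
        · rwa [measureReal_def, hμ] at this
        · intro x hx
          exact (Stmt11Aux.norm_HuPN_le hP N _).trans (Stmt11Aux.norm_HuF_le hpos hO5 hF _)
      calc ‖Hu (YN N t)‖ ≤ ‖Hu (P N y)‖ +
            ‖∫ s in Set.Ioc (0:ℝ) t, Stmt11Aux.HuL (P N (F (YN N s)))‖ := by
            rw [h1, h2]; exact norm_add_le _ _
        _ ≤ ‖y‖ + Real.sqrt (∑' n : ℕ+, a n) * t := by
            refine add_le_add ((Stmt11Aux.norm_HuPN_le hP N y).trans (Stmt11Aux.norm_Hu_le y)) h3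
        _ ≤ R := by
            rw [hR]
            have : Real.sqrt (∑' n : ℕ+, a n) * t ≤ Real.sqrt (∑' n : ℕ+, a n) * T :=
              mul_le_mul_of_nonneg_left ht.2 (Real.sqrt_nonneg _)
            linarith
    · have h1 : Hv (YN N t) = Hv (P N y) +
          Hv (∫ s in Set.Ioc (0:ℝ) t, P N (F (YN N s))) := by
        rw [heq, Stmt11Aux.Hv_add, Stmt11Aux.Hv_add, Stmt11Aux.Hv_mkH, add_zero]
      have h2 : Hv (∫ s in Set.Ioc (0:ℝ) t, P N (F (YN N s))) =
          ∫ s in Set.Ioc (0:ℝ) t, Stmt11Aux.HvL (P N (F (YN N s))) :=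
        (Stmt11Aux.HvL.integral_comp_comm hIok).symm
      have h3 : ‖∫ s in Set.Ioc (0:ℝ) t, Stmt11Aux.HvL (P N (F (YN N s)))‖ ≤
          Real.sqrt (∑' n : ℕ+, a n) * t := by
        have := MeasureTheory.norm_setIntegral_le_of_norm_le_const
          (μ := MeasureTheory.volume) (s := Set.Ioc (0:ℝ) t)
          (f := fun s => Stmt11Aux.HvL (P N (F (YN N s))))
          (C := Real.sqrt (∑' n : ℕ+, a n)) hμfin ?_
        · rwa [measureReal_def, hμ] at this
        · intro x hx
          exact (Stmt11Aux.norm_HvPN_le hP N _).trans (Stmt11Aux.norm_HvF_le hpos hO5 hF _)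
      calc ‖Hv (YN N t)‖ ≤ ‖Hv (P N y)‖ +
            ‖∫ s in Set.Ioc (0:ℝ) t, Stmt11Aux.HvL (P N (F (YN N s)))‖ := by
            rw [h1, h2]; exact norm_add_le _ _
        _ ≤ ‖y‖ + Real.sqrt (∑' n : ℕ+, a n) * t := by
            refine add_le_add ((Stmt11Aux.norm_HvPN_le hP N y).trans (Stmt11Aux.norm_Hv_le y)) h3
        _ ≤ R := by
            rw [hR]
            have : Real.sqrt (∑' n : ℕ+, a n) * t ≤ Real.sqrt (∑' n : ℕ+, a n) * T :=
              mul_le_mul_of_nonneg_left ht.2 (Real.sqrt_nonneg _)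
            linarith
  -- the difference satisfies an integral identity
  have hD : ∀ N : ℕ+, ∀ t, 0 ≤ t → YN N t - Y t =
      (P N y - y) + ∫ s in Set.Ioc (0:ℝ) t, (P N (F (YN N s)) - F (Y s)) := by
    intro N t ht
    rw [hYN N t ht, hY t ht,
      MeasureTheory.integral_sub (hInt _ (hGNc N) t ht) (hInt _ hgc t ht)]
    abel
  -- derivative of the difference
  have hderiv : ∀ N : ℕ+, ∀ t ∈ Set.Ico (0:ℝ) T,
      HasDerivWithinAt (fun u => YN N u - Y u)
        (P N (F (YN N t)) - F (Y t)) (Set.Ici t) t := by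
    intro N t ht
    have ht0 : (0:ℝ) ≤ t := ht.1
    have hφc : ContinuousOn (fun s => P N (F (YN N s)) - F (Y s)) (Set.Ici 0) :=
      (hGNc N).sub hgc
    have hii : IntervalIntegrable (fun s => P N (F (YN N s)) - F (Y s))
        MeasureTheory.volume 0 t := by
      rw [intervalIntegrable_iff_integrableOn_Ioc_of_le ht0]
      exact hInt _ hφc t ht0
    have hmeas : StronglyMeasurableAtFilter (fun s => P N (F (YN N s)) - F (Y s))
        (nhdsWithin t (Set.Ioi t)) MeasureTheory.volume := by
      refine ⟨Set.Ici 0, ?_, hφc.aestronglyMeasurable measurableSet_Ici⟩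
      refine Filter.mem_of_superset self_mem_nhdsWithin ?_
      exact fun x hx => le_trans ht0 (le_of_lt hx)
    have hcw : ContinuousWithinAt (fun s => P N (F (YN N s)) - F (Y s)) (Set.Ioi t) t := by
      refine (hφc t (Set.mem_Ici.2 ht0)).mono ?_
      exact fun x hx => le_trans ht0 (le_of_lt hx)
    have h1 : HasDerivWithinAt (fun u => ∫ x in (0:ℝ)..u, (P N (F (YN N x)) - F (Y x)))
        (P N (F (YN N t)) - F (Y t)) (Set.Ici t) t :=
      intervalIntegral.integral_hasDerivWithinAt_right hii hmeas hcw
    have h2 := h1.const_add (P N y - y)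
    refine h2.congr ?_ ?_
    · intro u hu
      have hu0 : (0:ℝ) ≤ u := le_trans ht0 hu
      rw [hD N u hu0, intervalIntegral.integral_of_le hu0]
    · rw [hD N t ht0, intervalIntegral.integral_of_le ht0]
  -- bound on the derivative
  have hbound : ∀ N : ℕ+, ∀ t ∈ Set.Ico (0:ℝ) T,
      ‖P N (F (YN N t)) - F (Y t)‖ ≤ K * ‖YN N t - Y t‖ + Real.sqrt (2 * tl N) := by
    intro N t ht
    have htIcc : t ∈ Set.Icc (0:ℝ) T := ⟨ht.1, ht.2.le⟩
    have hcomp := hcompYN N t htIcc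
    have h1 : ‖P N (F (YN N t)) - F (Y t)‖ ≤
        ‖P N (F (YN N t)) - P N (F (Y t))‖ + ‖P N (F (Y t)) - F (Y t)‖ :=
      norm_sub_le_norm_sub_add_norm_sub _ _ _
    have h2 : ‖P N (F (YN N t)) - P N (F (Y t))‖ ≤ ‖F (YN N t) - F (Y t)‖ :=
      Stmt11Aux.PN_lip hP N _ _
    have h3 := Stmt11Aux.F_lip hpos hO5 hF (YN N t) (Y t)
    have h4 : Real.sqrt (∑' n : ℕ+, a n * (n : ℝ) ^ 4) * (‖Hu (YN N t)‖ + ‖Hv (YN N t)‖) +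
        4 * Real.sqrt (∑' n : ℕ+, a n * (n : ℝ) ^ 2) ≤ K := by
      rw [hK]
      have hs4 := Real.sqrt_nonneg (∑' n : ℕ+, a n * (n : ℝ) ^ 4)
      nlinarith [hcomp.1, hcomp.2]
    have h5 : ‖F (YN N t) - F (Y t)‖ ≤ K * ‖YN N t - Y t‖ := by
      refine h3.trans ?_
      exact mul_le_mul_of_nonneg_right h4 (norm_nonneg _)
    have h6 : ‖P N (F (Y t)) - F (Y t)‖ ≤ Real.sqrt (2 * tl N) := by
      have := Stmt11Aux.PN_tail_sq hpos hO5 hF hP N (Y t)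
      have hnn : (0:ℝ) ≤ 2 * tl N := by linarith [htlnn N]
      nlinarith [norm_nonneg (P N (F (Y t)) - F (Y t)), Real.sq_sqrt hnn,
        Real.sqrt_nonneg (2 * tl N)]
    calc ‖P N (F (YN N t)) - F (Y t)‖ ≤
        ‖P N (F (YN N t)) - P N (F (Y t))‖ + ‖P N (F (Y t)) - F (Y t)‖ := h1
      _ ≤ K * ‖YN N t - Y t‖ + Real.sqrt (2 * tl N) :=
          add_le_add (h2.trans h5) h6
  -- Gronwall
  have hgron : ∀ N : ℕ+, ∀ t ∈ Set.Icc (0:ℝ) T, ‖YN N t - Y t‖ ≤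
      (‖P N y - y‖ + Real.sqrt (2 * tl N) * T) * Real.exp (K * T) := by
    intro N t ht
    have hDc : ContinuousOn (fun u => YN N u - Y u) (Set.Icc 0 T) :=
      ((hYNc N).mono Set.Icc_subset_Ici_self).sub (hYc.mono Set.Icc_subset_Ici_self)
    have hD0 : ‖YN N 0 - Y 0‖ ≤ ‖P N y - y‖ := by
      rw [hD N 0 le_rfl, Set.Ioc_self, MeasureTheory.Measure.restrict_empty,
        MeasureTheory.integral_zero_measure, add_zero]
    have := norm_le_gronwallBound_of_norm_deriv_right_le hDc (hderiv N) hD0 (hbound N) t ht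
    rw [sub_zero] at this
    refine this.trans ?_
    exact Stmt11Aux.gronwallBound_le (norm_nonneg _) hK1 (Real.sqrt_nonneg _) ht.1 ht.2
  -- squared form with explicit constants
  set C' : ℝ := 2 * (K * T) + Real.log 2 with hC'
  have hC'pos : 0 < C' := by
    rw [hC']
    have h2 : (0:ℝ) < Real.log 2 := Real.log_pos one_lt_two
    nlinarith
  have key : ∀ N : ℕ+, ∀ t ∈ Set.Icc (0:ℝ) T, ‖YN N t - Y t‖ ^ 2 ≤
      (‖P N y - y‖ ^ 2 + (4 * T) * T * tl N) * Real.exp C' := by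
    intro N t ht
    have hg := hgron N t ht
    have hrhs : (0:ℝ) ≤ (‖P N y - y‖ + Real.sqrt (2 * tl N) * T) * Real.exp (K * T) := by
      have := Real.sqrt_nonneg (2 * tl N)
      have := norm_nonneg (P N y - y)
      positivity
    have hsq : ‖YN N t - Y t‖ ^ 2 ≤
        ((‖P N y - y‖ + Real.sqrt (2 * tl N) * T) * Real.exp (K * T)) ^ 2 :=
      pow_le_pow_left₀ (norm_nonneg _) hg 2
    have hexp : Real.exp C' = Real.exp (K * T) ^ 2 * 2 := by
      rw [hC', Real.exp_add, Real.exp_log two_pos, ← Real.exp_nat_mul]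
      norm_num
    have hsq2 : Real.sqrt (2 * tl N) ^ 2 = 2 * tl N :=
      Real.sq_sqrt (by linarith [htlnn N])
    have hexpand : ((‖P N y - y‖ + Real.sqrt (2 * tl N) * T) * Real.exp (K * T)) ^ 2 ≤
        (‖P N y - y‖ ^ 2 + (4 * T) * T * tl N) * Real.exp C' := by
      rw [hexp]
      have e1 : (‖P N y - y‖ + Real.sqrt (2 * tl N) * T) ^ 2 ≤
          2 * (‖P N y - y‖ ^ 2 + (2 * tl N) * T ^ 2) := by
        nlinarith [sq_nonneg (‖P N y - y‖ - Real.sqrt (2 * tl N) * T), hsq2]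
      have e2 : 2 * (‖P N y - y‖ ^ 2 + (2 * tl N) * T ^ 2) ≤
          (‖P N y - y‖ ^ 2 + (4 * T) * T * tl N) * 2 := by
        nlinarith [htlnn N]
      have hepos : (0:ℝ) < Real.exp (K * T) ^ 2 := by positivity
      calc ((‖P N y - y‖ + Real.sqrt (2 * tl N) * T) * Real.exp (K * T)) ^ 2
          = (‖P N y - y‖ + Real.sqrt (2 * tl N) * T) ^ 2 * Real.exp (K * T) ^ 2 := by ring
        _ ≤ (2 * (‖P N y - y‖ ^ 2 + (2 * tl N) * T ^ 2)) * Real.exp (K * T) ^ 2 :=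
            mul_le_mul_of_nonneg_right e1 hepos.le
        _ ≤ ((‖P N y - y‖ ^ 2 + (4 * T) * T * tl N) * 2) * Real.exp (K * T) ^ 2 :=
            mul_le_mul_of_nonneg_right e2 hepos.le
        _ = (‖P N y - y‖ ^ 2 + (4 * T) * T * tl N) * (Real.exp (K * T) ^ 2 * 2) := by ring
    exact hsq.trans hexpand
  constructor
  · exact ⟨4 * T, by linarith, C', hC'pos, key⟩
  -- convergence of the sup
  · have htail : Tendsto tl atTop (nhds 0) :=
      Stmt11Aux.tendsto_tail_zero hSs (fun n => (hpos n).le)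
    have hPyu : Tendsto (fun N : ℕ+ => ∑' n : ℕ+, if N < n then (Hu y n) ^ 2 else 0)
        atTop (nhds 0) :=
      Stmt11Aux.tendsto_tail_zero (Stmt11Aux.l2_summable_sq (Hu y)) (fun n => sq_nonneg _)
    have hPyv : Tendsto (fun N : ℕ+ => ∑' n : ℕ+, if N < n then (Hv y n) ^ 2 else 0)
        atTop (nhds 0) :=
      Stmt11Aux.tendsto_tail_zero (Stmt11Aux.l2_summable_sq (Hv y)) (fun n => sq_nonneg _)
    have hPy : Tendsto (fun N : ℕ+ => ‖P N y - y‖ ^ 2) atTop (nhds 0) := by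
      have hup : ∀ N : ℕ+, ‖P N y - y‖ ^ 2 ≤
          (∑' n : ℕ+, if N < n then (Hu y n) ^ 2 else 0) +
            (∑' n : ℕ+, if N < n then (Hv y n) ^ 2 else 0) :=
        fun N => Stmt11Aux.PNy_sq_le hP y N
      have hlow : ∀ N : ℕ+, (0:ℝ) ≤ ‖P N y - y‖ ^ 2 := fun N => sq_nonneg _
      have hsum : Tendsto (fun N : ℕ+ =>
          (∑' n : ℕ+, if N < n then (Hu y n) ^ 2 else 0) +
            (∑' n : ℕ+, if N < n then (Hv y n) ^ 2 else 0)) atTop (nhds 0) := by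
        simpa using hPyu.add hPyv
      exact squeeze_zero hlow hup hsum
    have hbN : Tendsto (fun N : ℕ+ =>
        (‖P N y - y‖ ^ 2 + (4 * T) * T * tl N) * Real.exp C') atTop (nhds 0) := by
      have := (hPy.add (htail.const_mul ((4 * T) * T))).mul_const (Real.exp C')
      simpa using this
    have hsqrt : Tendsto (fun N : ℕ+ =>
        Real.sqrt ((‖P N y - y‖ ^ 2 + (4 * T) * T * tl N) * Real.exp C')) atTop (nhds 0) := by
      have := (Real.continuous_sqrt.tendsto 0).comp hbN
      rw [Real.sqrt_zero] at this
      exact this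
    haveI hne : Nonempty (Set.Icc (0:ℝ) T) :=
      Set.Nonempty.to_subtype (Set.nonempty_Icc.2 hT.le)
    have hub : ∀ N : ℕ+, ∀ t : Set.Icc (0:ℝ) T, ‖YN N t - Y t‖ ≤
        Real.sqrt ((‖P N y - y‖ ^ 2 + (4 * T) * T * tl N) * Real.exp C') := by
      intro N t
      have hk := key N t t.2
      have h1 : ‖YN N t - Y t‖ = Real.sqrt (‖YN N t - Y t‖ ^ 2) :=
        (Real.sqrt_sq (norm_nonneg _)).symm
      rw [h1]
      exact Real.sqrt_le_sqrt hk
    have hsup_le : ∀ N : ℕ+, (⨆ t : Set.Icc (0:ℝ) T, ‖YN N t - Y t‖) ≤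
        Real.sqrt ((‖P N y - y‖ ^ 2 + (4 * T) * T * tl N) * Real.exp C') := by
      intro N
      exact ciSup_le (hub N)
    have hsup_nonneg : ∀ N : ℕ+, 0 ≤ ⨆ t : Set.Icc (0:ℝ) T, ‖YN N t - Y t‖ := by
      intro N
      have hbdd : BddAbove (Set.range fun t : Set.Icc (0:ℝ) T => ‖YN N t - Y t‖) := by
        refine ⟨Real.sqrt ((‖P N y - y‖ ^ 2 + (4 * T) * T * tl N) * Real.exp C'), ?_⟩
        rintro x ⟨t, rfl⟩
        exact hub N t
      refine le_trans (norm_nonneg (YN N (⟨0, le_rfl, hT.le⟩ : Set.Icc (0:ℝ) T) -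
        Y (⟨0, le_rfl, hT.le⟩ : Set.Icc (0:ℝ) T))) ?_
      exact le_ciSup hbdd _
    exact squeeze_zero hsup_nonneg hsup_le hsqrt
end
end

section
/- Let μ be the countable product, over n ≥ 1, of the Gaussian measures N(0, 1/n²) on ℝ, regarded as a probability measure on the product space ℝ^{ℕ≥1}. Then the set of square-summable sequences {(u_n)_{n≥1} : Σ_{n≥1} u_n² < ∞} has μ-measure 1. -/
noncomputable section

open scoped BigOperators NNReal ENNReal
open MeasureTheory ProbabilityTheory

open Real

lemma sqint : Integrable (fun x : ℝ => x ^ 2 * ((Real.sqrt (2 * π * 1))⁻¹ * rexp (- (x - 0)^2 / (2 * 1)))) := by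
  have h := integrable_rpow_mul_exp_neg_mul_sq (b := 1/2) (by norm_num) (s := 2) (by norm_num)
  simp_rw [Real.rpow_two] at h
  have := (h.const_mul ((Real.sqrt (2 * π * 1))⁻¹))
  refine this.congr ?_
  filter_upwards with x
  ring_nf

lemma moment2_one : ∫⁻ x, ENNReal.ofReal (x ^ 2) ∂(gaussianReal 0 1) < ⊤ := by
  rw [gaussianReal_of_var_ne_zero _ one_ne_zero,
    lintegral_withDensity_eq_lintegral_mul _ (measurable_gaussianPDF _ _)
      (by fun_prop : Measurable fun x : ℝ => ENNReal.ofReal (x ^ 2))]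
  have hb : ∀ x : ℝ, gaussianPDF 0 1 x * ENNReal.ofReal (x ^ 2)
      = ENNReal.ofReal (x ^ 2 * ((Real.sqrt (2 * π * 1))⁻¹ * rexp (- (x - 0)^2 / (2 * 1)))) := by
    intro x
    rw [gaussianPDF, gaussianPDFReal, ← ENNReal.ofReal_mul (by positivity)]
    norm_num
    ring_nf
  simp_rw [Pi.mul_apply, hb]
  calc ∫⁻ x, ENNReal.ofReal (x ^ 2 * ((Real.sqrt (2 * π * 1))⁻¹ * rexp (- (x - 0)^2 / (2 * 1))))
      ≤ ∫⁻ x, ‖x ^ 2 * ((Real.sqrt (2 * π * 1))⁻¹ * rexp (- (x - 0)^2 / (2 * 1)))‖₊ := by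
        refine lintegral_mono fun x => ?_
        rw [← enorm_eq_nnnorm, ← ofReal_norm]
        exact ENNReal.ofReal_le_ofReal (le_abs_self _)
    _ < ⊤ := sqint.2

lemma moment2 (v : ℝ≥0) : ∫⁻ x, ENNReal.ofReal (x ^ 2) ∂(gaussianReal 0 v)
    = (v : ℝ≥0∞) * ∫⁻ x, ENNReal.ofReal (x ^ 2) ∂(gaussianReal 0 1) := by
  have hc : (⟨(Real.sqrt v) ^ 2, sq_nonneg _⟩ : ℝ≥0) * 1 = v := by
    ext
    simp [Real.sq_sqrt v.coe_nonneg]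
  have hmap : (gaussianReal 0 1).map ((Real.sqrt v) * ·) = gaussianReal 0 v := by
    rw [gaussianReal_map_const_mul, mul_zero]
    exact congrArg (gaussianReal 0) hc
  rw [← hmap, lintegral_map (by fun_prop : Measurable fun x : ℝ => ENNReal.ofReal (x ^ 2))
    (by fun_prop)]
  have he : ∀ x : ℝ, ENNReal.ofReal ((Real.sqrt v * x) ^ 2)
      = (v : ℝ≥0∞) * ENNReal.ofReal (x ^ 2) := by
    intro x
    rw [mul_pow, Real.sq_sqrt v.coe_nonneg, ENNReal.ofReal_mul v.coe_nonneg,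
      ENNReal.ofReal_coe_nnreal]
  simp_rw [he]
  rw [lintegral_const_mul _ (by fun_prop : Measurable fun x : ℝ => ENNReal.ofReal (x ^ 2))]

/-- Let `μ` be the countable product, over `n ≥ 1`, of the Gaussian
measures `N(0, 1/n²)` on `ℝ` (characterized here, as a probability measure on
`ℝ^{ℕ≥1}`, by its finite-dimensional cylinder probabilities). Then the set of
square-summable sequences has `μ`-measure `1`. -/
theorem stmt12 (μ : Measure (ℕ+ → ℝ)) [IsProbabilityMeasure μ]
    (hμ : ∀ (s : Finset ℕ+) (A : ℕ+ → Set ℝ), (∀ n, MeasurableSet (A n)) →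
      μ {u : ℕ+ → ℝ | ∀ n ∈ s, u n ∈ A n} =
        ∏ n ∈ s, gaussianReal 0 (1 / ((n : ℕ) : ℝ≥0) ^ 2) (A n)) :
    μ {u : ℕ+ → ℝ | Summable fun n : ℕ+ => (u n) ^ 2} = 1 := by
  have hmapn : ∀ n : ℕ+, μ.map (fun u => u n) = gaussianReal 0 (1 / ((n : ℕ) : ℝ≥0) ^ 2) := by
    intro n
    ext s hs
    rw [Measure.map_apply (measurable_pi_apply n) hs]
    have h1 := hμ {n} (fun _ => s) (fun _ => hs)
    simp only [Finset.mem_singleton, forall_eq, Finset.prod_singleton] at h1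
    exact h1
  set C := ∫⁻ x, ENNReal.ofReal (x ^ 2) ∂(gaussianReal 0 1) with hC
  have key : ∫⁻ u, ∑' n : ℕ+, ENNReal.ofReal ((u n) ^ 2) ∂μ < ⊤ := by
    rw [lintegral_tsum (fun n => (by fun_prop :
      Measurable fun u : ℕ+ → ℝ => ENNReal.ofReal ((u n) ^ 2)).aemeasurable)]
    have hterm : ∀ n : ℕ+, ∫⁻ u, ENNReal.ofReal ((u n) ^ 2) ∂μ
        = ((1 / ((n : ℕ) : ℝ≥0) ^ 2 : ℝ≥0) : ℝ≥0∞) * C := by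
      intro n
      rw [← lintegral_map (by fun_prop : Measurable fun x : ℝ => ENNReal.ofReal (x ^ 2))
        (measurable_pi_apply n), hmapn n, moment2]
    simp_rw [hterm]
    rw [ENNReal.tsum_mul_right]
    have hsum : ∑' n : ℕ+, ((1 / ((n : ℕ) : ℝ≥0) ^ 2 : ℝ≥0) : ℝ≥0∞) < ⊤ := by
      have hle : ∑' n : ℕ+, ((1 / ((n : ℕ) : ℝ≥0) ^ 2 : ℝ≥0) : ℝ≥0∞)
          ≤ ∑' k : ℕ, ((1 / (k : ℝ≥0) ^ 2 : ℝ≥0) : ℝ≥0∞) :=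
        ENNReal.tsum_comp_le_tsum_of_injective (fun a b h => PNat.coe_injective h)
          (fun k => ((1 / (k : ℝ≥0) ^ 2 : ℝ≥0) : ℝ≥0∞))
      refine hle.trans_lt ?_
      rw [lt_top_iff_ne_top, ENNReal.tsum_coe_ne_top_iff_summable]
      rw [← NNReal.summable_coe]
      have : Summable fun k : ℕ => 1 / (k : ℝ) ^ 2 := by
        exact Real.summable_one_div_nat_pow.mpr (by norm_num : 1 < 2)
      refine this.congr fun k => ?_
      push_cast
      rfl
    exact ENNReal.mul_lt_top hsum moment2_one
  have hae := ae_lt_top (by fun_prop : Measurable fun u : ℕ+ → ℝ =>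
    ∑' n : ℕ+, ENNReal.ofReal ((u n) ^ 2)) key.ne
  have hae2 : ∀ᵐ u ∂μ, Summable fun n : ℕ+ => (u n) ^ 2 := by
    filter_upwards [hae] with u hu
    have := ENNReal.summable_toReal hu.ne
    simpa [ENNReal.toReal_ofReal (sq_nonneg _)] using this
  have heq : {u : ℕ+ → ℝ | Summable fun n : ℕ+ => (u n) ^ 2} =ᵐ[μ] (Set.univ : Set (ℕ+ → ℝ)) := by
    rw [Filter.eventuallyEq_univ]
    exact hae2
  rw [measure_congr heq, measure_univ]
end
end

section
/- Let φ : H → ℝ be bounded, twice continuously Fréchet differentiable with bounded first and second derivatives (φ ∈ C_b²(H)), and for y = (x,u,v) ∈ H define Aφ(y) = Dφ(y)(e₀) · (⟨(n a_n^{1/2} cos(nx))_{n≥1}, v⟩_{ℓ²} + ⟨(n a_n^{1/2} sin(nx))_{n≥1}, u⟩_{ℓ²}) + Σ_{n≥1} a_n^{1/2} cos(nx) Dφ(y)(e_n^u) − Σ_{n≥1} a_n^{1/2} sin(nx) Dφ(y)(e_n^v). Then there exists a constant C > 0, depending only on (a_n)_{n≥1} and on the supremum bounds of the derivatives of φ,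 such that Aφ(y)² ≤ C (1 + ‖u‖_{ℓ²}² + ‖v‖_{ℓ²}²) for all y ∈ H. -/
noncomputable section

open scoped BigOperators RealInnerProductSpace
open MeasureTheory Filter

/-- `e₀ = (1,0,0) ∈ H`. -/
def e0 : Hsp := mkH 1 0 0

/-- `eₙᵘ ∈ H`: the `n`-th standard ℓ²-basis vector placed in the `u`-component. -/
def eu (n : ℕ+) : Hsp := mkH 0 (lp.single 2 n 1) 0

/-- `eₙᵛ ∈ H`: the `n`-th standard ℓ²-basis vector placed in the `v`-component. -/
def ev (n : ℕ+) : Hsp := mkH 0 0 (lp.single 2 n 1)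

/-- The first-order part of the Kolmogorov operator:
`Aφ(y) = Dφ(y)(e₀)·(⟨(n√aₙ cos(nx))ₙ, v⟩ + ⟨(n√aₙ sin(nx))ₙ, u⟩)
 + Σ √aₙ cos(nx) Dφ(y)(eₙᵘ) − Σ √aₙ sin(nx) Dφ(y)(eₙᵛ)`. -/
def Aop (a : ℕ+ → ℝ) (φ : Hsp → ℝ) (y : Hsp) : ℝ :=
  fderiv ℝ φ y e0 *
      ((∑' n : ℕ+, (n : ℝ) * Real.sqrt (a n) * Real.cos ((n : ℝ) * Hx y) * Hv y n) +
        (∑' n : ℕ+, (n : ℝ) * Real.sqrt (a n) * Real.sin ((n : ℝ) * Hx y) * Hu y n)) +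
    (∑' n : ℕ+, Real.sqrt (a n) * Real.cos ((n : ℝ) * Hx y) * fderiv ℝ φ y (eu n)) -
    (∑' n : ℕ+, Real.sqrt (a n) * Real.sin ((n : ℝ) * Hx y) * fderiv ℝ φ y (ev n))

-- auxiliary lemmas

lemma abs_tsum_le' {f g : ℕ+ → ℝ} (hg : Summable g) (h : ∀ n, |f n| ≤ g n) :
    |∑' n, f n| ≤ ∑' n, g n := by
  have hf : Summable fun n => |f n| :=
    Summable.of_nonneg_of_le (fun n => abs_nonneg _) h hg
  calc |∑' n, f n| ≤ ∑' n, |f n| := by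
        simpa [Real.norm_eq_abs] using
          norm_tsum_le_tsum_norm (f := f) (by simpa [Real.norm_eq_abs] using hf)
    _ ≤ ∑' n, g n := Summable.tsum_le_tsum h hf hg

lemma summable_two_div_sq : Summable (fun n : ℕ+ => 2 / (n : ℝ) ^ 2) := by
  have h : Summable (fun n : ℕ => 2 / (n : ℝ) ^ 2) := by
    simpa [div_eq_mul_inv, mul_comm] using
      (Real.summable_one_div_nat_pow.mpr one_lt_two).mul_left 2
  have := h.comp_injective (fun a b hab => PNat.coe_injective hab :
    Function.Injective (fun n : ℕ+ => (n : ℕ)))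
  exact this

lemma summable_b {a : ℕ+ → ℝ} (hpos : ∀ n, 0 < a n) (hO5 : MemO5 a) :
    Summable (fun n : ℕ+ => (n : ℝ) * Real.sqrt (a n)) := by
  have hle : ∀ n : ℕ+, (n : ℝ) * Real.sqrt (a n)
      ≤ (1 + (n : ℝ) ^ 2) ^ 5 * a n ^ 2 + 2 / (n : ℝ) ^ 2 := by
    intro n
    set s := Real.sqrt (a n) with hs
    have hs0 : 0 ≤ s := Real.sqrt_nonneg _
    have hn1 : (1 : ℝ) ≤ (n : ℝ) := by exact_mod_cast n.one_le
    have hn0 : (0 : ℝ) < (n : ℝ) := by linarith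
    have hsq : s ^ 2 = a n := Real.sq_sqrt (hpos n).le
    have hpow : (n : ℝ) ^ 10 * s ^ 4 ≤ (1 + (n : ℝ) ^ 2) ^ 5 * a n ^ 2 := by
      have h1 : (n : ℝ) ^ 10 ≤ (1 + (n : ℝ) ^ 2) ^ 5 := by
        have h2 : ((n : ℝ) ^ 2) ^ 5 ≤ (1 + (n : ℝ) ^ 2) ^ 5 := by
          apply pow_le_pow_left₀ (by positivity); linarith
        simpa [← pow_mul] using h2
      have h2 : s ^ 4 = a n ^ 2 := by
        rw [show (4 : ℕ) = 2 * 2 from rfl, pow_mul, hsq]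
      rw [h2]
      exact mul_le_mul_of_nonneg_right h1 (by positivity)
    have key : (n : ℝ) * s ≤ (n : ℝ) ^ 10 * s ^ 4 + 2 / (n : ℝ) ^ 2 := by
      rcases le_or_gt ((n : ℝ) ^ 3 * s) 1 with h | h
      · have h' : (n : ℝ) * s ≤ 2 / (n : ℝ) ^ 2 := by
          rw [le_div_iff₀ (by positivity)]
          nlinarith
        nlinarith [mul_nonneg (pow_nonneg hn0.le 10) (pow_nonneg hs0 4)]
      · have h3 : (1 : ℝ) ≤ ((n : ℝ) ^ 3 * s) ^ 3 := by
          nlinarith [sq_nonneg ((n : ℝ) ^ 3 * s)]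
        have h4 : (n : ℝ) * s ≤ (n : ℝ) * s * (((n : ℝ) ^ 3 * s) ^ 3) := by
          nlinarith [mul_nonneg hn0.le hs0]
        calc (n : ℝ) * s ≤ (n : ℝ) * s * (((n : ℝ) ^ 3 * s) ^ 3) := h4
          _ = (n : ℝ) ^ 10 * s ^ 4 := by ring
          _ ≤ (n : ℝ) ^ 10 * s ^ 4 + 2 / (n : ℝ) ^ 2 :=
              le_add_of_nonneg_right (by positivity)
    have : (1 + (n : ℝ) ^ 2) ^ 5 * a n ^ 2 + 2 / (n : ℝ) ^ 2
        ≥ (n : ℝ) ^ 10 * s ^ 4 + 2 / (n : ℝ) ^ 2 := by linarith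
    linarith
  exact Summable.of_nonneg_of_le (fun n => by positivity) hle
    (hO5.add summable_two_div_sq)

lemma norm_e0 : ‖e0‖ = 1 := by
  have h : ‖e0‖ ^ 2 = 1 := by
    rw [WithLp.prod_norm_sq_eq_of_L2]
    have e1 : e0.fst = (1 : ℝ) := rfl
    have e2 : e0.snd = (0 : WithLp 2 (l2 × l2)) := rfl
    rw [e1, e2]; simp
  nlinarith [norm_nonneg e0]

lemma norm_single_one (n : ℕ+) : ‖(lp.single 2 n (1:ℝ) : l2)‖ = 1 := by
  have := @lp.norm_single ℕ+ (fun _ => ℝ) 2 _ _ (by norm_num) n (1:ℝ)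
  simpa using this

lemma norm_eu (n : ℕ+) : ‖eu n‖ = 1 := by
  have h : ‖eu n‖ ^ 2 = 1 := by
    rw [WithLp.prod_norm_sq_eq_of_L2, WithLp.prod_norm_sq_eq_of_L2]
    have e1 : (eu n).fst = (0 : ℝ) := rfl
    have e2 : (eu n).snd.fst = lp.single 2 n (1:ℝ) := rfl
    have e3 : (eu n).snd.snd = (0 : l2) := rfl
    rw [e1, e2, e3, norm_single_one]; simp
  nlinarith [norm_nonneg (eu n)]

lemma norm_ev (n : ℕ+) : ‖ev n‖ = 1 := by
  have h : ‖ev n‖ ^ 2 = 1 := by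
    rw [WithLp.prod_norm_sq_eq_of_L2, WithLp.prod_norm_sq_eq_of_L2]
    have e1 : (ev n).fst = (0 : ℝ) := rfl
    have e2 : (ev n).snd.fst = (0 : l2) := rfl
    have e3 : (ev n).snd.snd = lp.single 2 n (1:ℝ) := rfl
    rw [e1, e2, e3, norm_single_one]; simp
  nlinarith [norm_nonneg (ev n)]

/-- For `φ ∈ C_b²(H)` there is a constant `C > 0`, depending only on
`(aₙ)` and the bounds on the derivatives of `φ`, such that
`Aφ(y)² ≤ C (1 + ‖u‖² + ‖v‖²)` for all `y = (x,u,v) ∈ H`. -/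
theorem stmt15 (a : ℕ+ → ℝ) (hpos : ∀ n, 0 < a n) (hO5 : MemO5 a)
    (φ : Hsp → ℝ) (hreg : ContDiff ℝ 2 φ)
    (hb : ∃ M : ℝ, ∀ y : Hsp, |φ y| ≤ M)
    (hb1 : ∃ M : ℝ, ∀ y : Hsp, ‖fderiv ℝ φ y‖ ≤ M)
    (hb2 : ∃ M : ℝ, ∀ y : Hsp, ‖fderiv ℝ (fderiv ℝ φ) y‖ ≤ M) :
    ∃ C > (0 : ℝ), ∀ y : Hsp,
      (Aop a φ y) ^ 2 ≤ C * (1 + ‖Hu y‖ ^ 2 + ‖Hv y‖ ^ 2) := by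
  obtain ⟨M, hM⟩ := hb1
  have hM0 : 0 ≤ M := le_trans (norm_nonneg _) (hM 0)
  set b : ℕ+ → ℝ := fun n => (n : ℝ) * Real.sqrt (a n) with hbdef
  have hb0 : ∀ n, 0 ≤ b n := fun n => by positivity
  have hbsum : Summable b := summable_b hpos hO5
  set B : ℝ := ∑' n, b n with hBdef
  have hB0 : 0 ≤ B := tsum_nonneg hb0
  have hble : ∀ n : ℕ+, Real.sqrt (a n) ≤ b n := by
    intro n
    have hn1 : (1 : ℝ) ≤ (n : ℝ) := by exact_mod_cast n.one_le
    have := Real.sqrt_nonneg (a n)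
    calc Real.sqrt (a n) = 1 * Real.sqrt (a n) := (one_mul _).symm
      _ ≤ (n : ℝ) * Real.sqrt (a n) := by apply mul_le_mul_of_nonneg_right hn1 this
  refine ⟨12 * M ^ 2 * B ^ 2 + 1, by positivity, fun y => ?_⟩
  -- bound on derivative applied to unit vectors
  have hd : ∀ w : Hsp, ‖w‖ = 1 → |fderiv ℝ φ y w| ≤ M := by
    intro w hw
    have := (fderiv ℝ φ y).le_opNorm w
    rw [hw, mul_one] at this
    calc |fderiv ℝ φ y w| = ‖fderiv ℝ φ y w‖ := (Real.norm_eq_abs _).symm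
      _ ≤ ‖fderiv ℝ φ y‖ := this
      _ ≤ M := hM y
  -- bounds on the four series
  have hvcoord : ∀ n : ℕ+, |Hv y n| ≤ ‖Hv y‖ := fun n => by
    simpa [Real.norm_eq_abs] using lp.norm_apply_le_norm (by norm_num) (Hv y) n
  have hucoord : ∀ n : ℕ+, |Hu y n| ≤ ‖Hu y‖ := fun n => by
    simpa [Real.norm_eq_abs] using lp.norm_apply_le_norm (by norm_num) (Hu y) n
  have hs1 : |∑' n : ℕ+, (n : ℝ) * Real.sqrt (a n) * Real.cos ((n : ℝ) * Hx y) * Hv y n|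
      ≤ B * ‖Hv y‖ := by
    rw [hBdef, ← tsum_mul_right]
    apply abs_tsum_le' (hbsum.mul_right _)
    intro n
    have h1 : |Real.cos ((n : ℝ) * Hx y)| ≤ 1 := Real.abs_cos_le_one _
    calc |(n : ℝ) * Real.sqrt (a n) * Real.cos ((n : ℝ) * Hx y) * Hv y n|
        = b n * |Real.cos ((n : ℝ) * Hx y)| * |Hv y n| := by
          rw [abs_mul, abs_mul, abs_of_nonneg (hb0 n)]
      _ ≤ b n * 1 * ‖Hv y‖ := by
          apply mul_le_mul (mul_le_mul_of_nonneg_left h1 (hb0 n)) (hvcoord n)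
            (abs_nonneg _) (by positivity)
      _ = b n * ‖Hv y‖ := by ring
  have hs2 : |∑' n : ℕ+, (n : ℝ) * Real.sqrt (a n) * Real.sin ((n : ℝ) * Hx y) * Hu y n|
      ≤ B * ‖Hu y‖ := by
    rw [hBdef, ← tsum_mul_right]
    apply abs_tsum_le' (hbsum.mul_right _)
    intro n
    have h1 : |Real.sin ((n : ℝ) * Hx y)| ≤ 1 := Real.abs_sin_le_one _
    calc |(n : ℝ) * Real.sqrt (a n) * Real.sin ((n : ℝ) * Hx y) * Hu y n|
        = b n * |Real.sin ((n : ℝ) * Hx y)| * |Hu y n| := by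
          rw [abs_mul, abs_mul, abs_of_nonneg (hb0 n)]
      _ ≤ b n * 1 * ‖Hu y‖ := by
          apply mul_le_mul (mul_le_mul_of_nonneg_left h1 (hb0 n)) (hucoord n)
            (abs_nonneg _) (by positivity)
      _ = b n * ‖Hu y‖ := by ring
  have hs3 : |∑' n : ℕ+, Real.sqrt (a n) * Real.cos ((n : ℝ) * Hx y) * fderiv ℝ φ y (eu n)|
      ≤ B * M := by
    rw [hBdef, ← tsum_mul_right]
    apply abs_tsum_le' (hbsum.mul_right _)
    intro n
    have h1 : |Real.cos ((n : ℝ) * Hx y)| ≤ 1 := Real.abs_cos_le_one _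
    have h2 : |fderiv ℝ φ y (eu n)| ≤ M := hd _ (norm_eu n)
    calc |Real.sqrt (a n) * Real.cos ((n : ℝ) * Hx y) * fderiv ℝ φ y (eu n)|
        = Real.sqrt (a n) * |Real.cos ((n : ℝ) * Hx y)| * |fderiv ℝ φ y (eu n)| := by
          rw [abs_mul, abs_mul, abs_of_nonneg (Real.sqrt_nonneg _)]
      _ ≤ b n * 1 * M := by
          apply mul_le_mul _ h2 (abs_nonneg _) (by positivity)
          apply mul_le_mul (hble n) h1 (abs_nonneg _) (hb0 n)
      _ = b n * M := by ring
  have hs4 : |∑' n : ℕ+, Real.sqrt (a n) * Real.sin ((n : ℝ) * Hx y) * fderiv ℝ φ y (ev n)|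
      ≤ B * M := by
    rw [hBdef, ← tsum_mul_right]
    apply abs_tsum_le' (hbsum.mul_right _)
    intro n
    have h1 : |Real.sin ((n : ℝ) * Hx y)| ≤ 1 := Real.abs_sin_le_one _
    have h2 : |fderiv ℝ φ y (ev n)| ≤ M := hd _ (norm_ev n)
    calc |Real.sqrt (a n) * Real.sin ((n : ℝ) * Hx y) * fderiv ℝ φ y (ev n)|
        = Real.sqrt (a n) * |Real.sin ((n : ℝ) * Hx y)| * |fderiv ℝ φ y (ev n)| := by
          rw [abs_mul, abs_mul, abs_of_nonneg (Real.sqrt_nonneg _)]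
      _ ≤ b n * 1 * M := by
          apply mul_le_mul _ h2 (abs_nonneg _) (by positivity)
          apply mul_le_mul (hble n) h1 (abs_nonneg _) (hb0 n)
      _ = b n * M := by ring
  have hd0 : |fderiv ℝ φ y e0| ≤ M := hd _ norm_e0
  -- combine
  set s1 := ∑' n : ℕ+, (n : ℝ) * Real.sqrt (a n) * Real.cos ((n : ℝ) * Hx y) * Hv y n
  set s2 := ∑' n : ℕ+, (n : ℝ) * Real.sqrt (a n) * Real.sin ((n : ℝ) * Hx y) * Hu y n
  set s3 := ∑' n : ℕ+, Real.sqrt (a n) * Real.cos ((n : ℝ) * Hx y) * fderiv ℝ φ y (eu n)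
  set s4 := ∑' n : ℕ+, Real.sqrt (a n) * Real.sin ((n : ℝ) * Hx y) * fderiv ℝ φ y (ev n)
  have hA : Aop a φ y = fderiv ℝ φ y e0 * (s1 + s2) + s3 - s4 := rfl
  have habs : |Aop a φ y| ≤ M * B * (‖Hu y‖ + ‖Hv y‖ + 2) := by
    rw [hA]
    have t1 : |fderiv ℝ φ y e0 * (s1 + s2) + s3 - s4|
        ≤ |fderiv ℝ φ y e0 * (s1 + s2)| + |s3| + |s4| := by
      calc |fderiv ℝ φ y e0 * (s1 + s2) + s3 - s4|
          ≤ |fderiv ℝ φ y e0 * (s1 + s2) + s3| + |s4| := abs_sub _ _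
        _ ≤ |fderiv ℝ φ y e0 * (s1 + s2)| + |s3| + |s4| := by
            linarith [abs_add_le (fderiv ℝ φ y e0 * (s1 + s2)) s3]
    have t2 : |fderiv ℝ φ y e0 * (s1 + s2)| ≤ M * (B * ‖Hv y‖ + B * ‖Hu y‖) := by
      rw [abs_mul]
      apply mul_le_mul hd0 ((abs_add_le s1 s2).trans (add_le_add hs1 hs2))
        (abs_nonneg _) hM0
    calc |fderiv ℝ φ y e0 * (s1 + s2) + s3 - s4|
        ≤ |fderiv ℝ φ y e0 * (s1 + s2)| + |s3| + |s4| := t1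
      _ ≤ M * (B * ‖Hv y‖ + B * ‖Hu y‖) + B * M + B * M := by
          linarith [t2, hs3, hs4]
      _ = M * B * (‖Hu y‖ + ‖Hv y‖ + 2) := by ring
  have key : (‖Hu y‖ + ‖Hv y‖ + 2) ^ 2 ≤ 12 * (1 + ‖Hu y‖ ^ 2 + ‖Hv y‖ ^ 2) := by
    nlinarith [sq_nonneg (‖Hu y‖ - ‖Hv y‖), sq_nonneg (‖Hu y‖ - 1), sq_nonneg (‖Hv y‖ - 1),
      norm_nonneg (Hu y), norm_nonneg (Hv y)]
  have h1 : (Aop a φ y) ^ 2 ≤ (M * B * (‖Hu y‖ + ‖Hv y‖ + 2)) ^ 2 := by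
    rw [← sq_abs]
    exact pow_le_pow_left₀ (abs_nonneg _) habs 2
  have h2 : (M * B * (‖Hu y‖ + ‖Hv y‖ + 2)) ^ 2
      = M ^ 2 * B ^ 2 * (‖Hu y‖ + ‖Hv y‖ + 2) ^ 2 := by ring
  have h3 : M ^ 2 * B ^ 2 * (‖Hu y‖ + ‖Hv y‖ + 2) ^ 2
      ≤ M ^ 2 * B ^ 2 * (12 * (1 + ‖Hu y‖ ^ 2 + ‖Hv y‖ ^ 2)) :=
    mul_le_mul_of_nonneg_left key (by positivity)
  have hS : (0 : ℝ) ≤ 1 + ‖Hu y‖ ^ 2 + ‖Hv y‖ ^ 2 := by positivity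
  nlinarith [h1, h2, h3, hS]
end
end
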